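/- arXiv:2105.13922 — 8 statements merged into one kernel-verified Lean document; each statement's English description precedes it below -/
import Mathlib

section
/- Let f : ℝ^m × ℝ^n → ℝ^m and g : ℝ^m × ℝ^n → ℝ^n be three-times continuously differentiable with bounded derivatives, let α, λ > 0, and fix an initial point (φ₀, θ₀). For h > 0 define the discrete simultaneous Euler step φ₁ = φ₀ + αh·f(φ₀, θ₀), θ₁ = θ₀ + λh·g(φ₀, θ₀), and let (φ̃(s), θ̃(s)) be the solution with initial condition (φ₀, θ₀) of the modified system dφ/ds = f − (αh/2)(f·∇_φ f + g·∇_θ f), dθ/ds = g − (λh/2)(f·∇_φ g + g·∇_θ g). Then there exist constants C > 0 and h₀ > 0 such that for all 0 < h < h₀, ‖φ₁ − φ̃(αh)‖ ≤ C h³ and ‖θ₁ − θ̃(λh)‖ ≤ C h³. -/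
open Set Metric

noncomputable section

section helpers
variable {E F : Type*} [NormedAddCommGroup E] [NormedSpace ℝ E]
  [NormedAddCommGroup F] [NormedSpace ℝ F]

lemma lip_of_fderiv_bound {f : E → F} (hf : Differentiable ℝ f) {C : ℝ}
    (hC : ∀ z, ‖fderiv ℝ f z‖ ≤ C) (x y : E) : ‖f y - f x‖ ≤ C * ‖y - x‖ :=
  convex_univ.norm_image_sub_le_of_norm_fderiv_le (fun z _ => hf z)
    (fun z _ => hC z) (mem_univ x) (mem_univ y)

lemma taylor_one {f : E → F} (hf : Differentiable ℝ f) {L : ℝ}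
    (hL : ∀ x y, ‖fderiv ℝ f y - fderiv ℝ f x‖ ≤ L * ‖y - x‖) (hL0 : 0 ≤ L) (x y : E) :
    ‖f y - f x - fderiv ℝ f x (y - x)‖ ≤ L * ‖y - x‖ * ‖y - x‖ :=
  (convex_closedBall x ‖y - x‖).norm_image_sub_le_of_norm_fderiv_le'
    (fun z _ => hf z)
    (fun z hz => (hL x z).trans
      (mul_le_mul_of_nonneg_left (mem_closedBall_iff_norm.1 hz) hL0))
    (mem_closedBall_self (norm_nonneg _)) (mem_closedBall_iff_norm.2 le_rfl)

lemma curve_bound {u u' : ℝ → E} {b C : ℝ}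
    (hu : ∀ s, HasDerivAt u (u' s) s)
    (hC : ∀ s ∈ Icc (0:ℝ) b, ‖u' s‖ ≤ C) :
    ∀ s ∈ Icc (0:ℝ) b, ‖u s - u 0‖ ≤ C * s := by
  intro s hs
  have := norm_image_sub_le_of_norm_deriv_le_segment'
    (f := u) (f' := u') (a := 0) (b := b)
    (fun t _ => (hu t).hasDerivWithinAt)
    (fun t ht => hC t (Ico_subset_Icc_self ht)) s hs
  simpa using this

lemma comp_bound (x y : E) (t K : ℝ) (ht : 0 ≤ t) (hx : ‖x‖ ≤ K) (hy : ‖y‖ ≤ K * K) :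
    ‖x - t • y‖ ≤ K + t * (K * K) := by
  refine (norm_sub_le _ _).trans ?_
  rw [norm_smul, Real.norm_eq_abs, abs_of_nonneg ht]
  exact add_le_add hx (mul_le_mul_of_nonneg_left hy ht)

set_option maxHeartbeats 1000000 in
/-- Key one-player estimate for the modified-flow theorem. -/
lemma key_estimate {P E : Type*} [NormedAddCommGroup P] [NormedSpace ℝ P]
    [NormedAddCommGroup E] [NormedSpace ℝ E]
    (F1 : P → E) (W : P → P) (z z' : ℝ → P) (u : ℝ → E) (z0 : P)
    (K M e a B b h c : ℝ)
    (hK : 0 ≤ K) (hM : 0 ≤ M) (he : 0 ≤ e) (ha : 0 < a) (hB : 0 ≤ B)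
    (hh : 0 < h) (hh1 : h ≤ 1) (hab : a * h ≤ b) (hbB : b ≤ B * h)
    (hc : K * M * M * B + K * (e + K * M * B) + B * K * K * M ≤ c)
    (hF1diff : Differentiable ℝ F1)
    (hF1d : ∀ p, ‖fderiv ℝ F1 p‖ ≤ K)
    (hF1dlip : ∀ p q, ‖fderiv ℝ F1 q - fderiv ℝ F1 p‖ ≤ K * ‖q - p‖)
    (hWb : ∀ p, ‖W p‖ ≤ K)
    (hWlip : ∀ p q, ‖W q - W p‖ ≤ K * ‖q - p‖)
    (hz : ∀ s, HasDerivAt z (z' s) s) (hz0 : z 0 = z0)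
    (hz'b : ∀ s ∈ Icc (0:ℝ) b, ‖z' s‖ ≤ M)
    (hz'W : ∀ s ∈ Icc (0:ℝ) b, ‖z' s - W (z s)‖ ≤ e * h)
    (hu : ∀ s, HasDerivAt u
      (F1 (z s) - (a * h / 2) • fderiv ℝ F1 (z s) (W (z s))) s) :
    ‖u 0 + (a * h) • F1 z0 - u (a * h)‖ ≤ (c * B * B) * h ^ 3 := by
  have hb0 : 0 ≤ b := le_trans (by positivity) hab
  have haB : a ≤ B := le_of_mul_le_mul_right (hab.trans hbB) hh
  have hc0 : 0 ≤ c := by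
    have h1 : 0 ≤ K * M * M * B := by positivity
    have h2 : 0 ≤ K * (e + K * M * B) := by positivity
    have h3 : 0 ≤ B * K * K * M := by positivity
    linarith
  set A : E := fderiv ℝ F1 z0 (W z0) with hA
  -- z stays close to z0
  have hz1 : ∀ s ∈ Icc (0:ℝ) b, ‖z s - z0‖ ≤ M * s := by
    intro s hs
    have := curve_bound hz hz'b s hs
    rwa [hz0] at this
  -- refined closeness: z s ≈ z0 + s • W z0
  have hz2 : ∀ s ∈ Icc (0:ℝ) b, ‖z s - z0 - s • W z0‖ ≤ (e + K * M * B) * h * s := by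
    have hd : ∀ s : ℝ, HasDerivAt (fun s => z s - z0 - s • W z0) (z' s - W z0) s := by
      intro s
      have h1 : HasDerivAt (fun s : ℝ => s • W z0) (W z0) s := by
        simpa using (hasDerivAt_id s).smul_const (W z0)
      exact ((hz s).sub_const z0).sub h1
    have hbd : ∀ t ∈ Icc (0:ℝ) b, ‖z' t - W z0‖ ≤ (e + K * M * B) * h := by
      intro t ht
      have h1 : ‖z' t - W z0‖ ≤ ‖z' t - W (z t)‖ + ‖W (z t) - W z0‖ := by
        have : z' t - W z0 = (z' t - W (z t)) + (W (z t) - W z0) := by abel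
        rw [this]; exact norm_add_le _ _
      have h2 : ‖W (z t) - W z0‖ ≤ K * (M * t) :=
        (hWlip z0 (z t)).trans (mul_le_mul_of_nonneg_left (hz1 t ht) hK)
      have h3 : K * (M * t) ≤ K * M * B * h := by
        have h5 : t ≤ B * h := le_trans ht.2 hbB
        have h6 := mul_le_mul_of_nonneg_left h5 (mul_nonneg hK hM)
        linarith
      have h4 := hz'W t ht
      linarith
    intro s hs
    have := curve_bound hd hbd s hs
    simpa [hz0] using this
  -- Taylor estimate for F1
  have htay : ∀ s ∈ Icc (0:ℝ) b,
      ‖F1 (z s) - F1 z0 - fderiv ℝ F1 z0 (z s - z0)‖ ≤ K * (M * s) * (M * s) := by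
    intro s hs
    refine (taylor_one hF1diff hF1dlip hK z0 (z s)).trans ?_
    have h1 := hz1 s hs
    have h2 : (0:ℝ) ≤ M * s := le_trans (norm_nonneg _) h1
    have h3 := mul_le_mul h1 h1 (norm_nonneg _) h2
    have h4 := mul_le_mul_of_nonneg_left h3 hK
    calc K * ‖z s - z0‖ * ‖z s - z0‖ = K * (‖z s - z0‖ * ‖z s - z0‖) := by ring
    _ ≤ K * (M * s * (M * s)) := h4
    _ = K * (M * s) * (M * s) := by ring
  -- the auxiliary function w and its derivative
  set w : ℝ → E := fun s => u s - u 0 - s • (F1 z0 - (a * h / 2) • A) - (s ^ 2 / 2) • A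
    with hw
  have hwd : ∀ s : ℝ, HasDerivAt w
      ((F1 (z s) - (a * h / 2) • fderiv ℝ F1 (z s) (W (z s)))
        - (F1 z0 - (a * h / 2) • A) - s • A) s := by
    intro s
    have h1 : HasDerivAt (fun s : ℝ => s • (F1 z0 - (a * h / 2) • A))
        (F1 z0 - (a * h / 2) • A) s := by
      simpa using (hasDerivAt_id s).smul_const (F1 z0 - (a * h / 2) • A)
    have h2 : HasDerivAt (fun s : ℝ => (s ^ 2 / 2) • A) (s • A) s := by
      have h3 : HasDerivAt (fun s : ℝ => s ^ 2 / 2) s s := by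
        have := (hasDerivAt_pow 2 s).div_const 2
        simpa using this
      simpa using h3.smul_const A
    exact (((hu s).sub_const (u 0)).sub h1).sub h2
  -- bound on the derivative of w
  have hwb : ∀ s ∈ Icc (0:ℝ) b,
      ‖(F1 (z s) - (a * h / 2) • fderiv ℝ F1 (z s) (W (z s)))
        - (F1 z0 - (a * h / 2) • A) - s • A‖ ≤ (c * B) * h ^ 2 := by
    intro s hs
    have hsB : s ≤ B * h := le_trans hs.2 hbB
    have hsnn : 0 ≤ s := hs.1
    have hsplit : (F1 (z s) - (a * h / 2) • fderiv ℝ F1 (z s) (W (z s)))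
        - (F1 z0 - (a * h / 2) • A) - s • A
        = (F1 (z s) - F1 z0 - s • A)
          - (a * h / 2) • (fderiv ℝ F1 (z s) (W (z s)) - A) := by
      rw [smul_sub]; abel
    rw [hsplit]
    -- term 1
    have ht1 : ‖F1 (z s) - F1 z0 - s • A‖
        ≤ K * (M * s) * (M * s) + K * ((e + K * M * B) * h * s) := by
      have e1 : F1 (z s) - F1 z0 - s • A
          = (F1 (z s) - F1 z0 - fderiv ℝ F1 z0 (z s - z0))
            + fderiv ℝ F1 z0 (z s - z0 - s • W z0) := by
        have e1' : fderiv ℝ F1 z0 (z s - z0 - s • W z0)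
            = fderiv ℝ F1 z0 (z s - z0) - s • A := by
          rw [map_sub, (fderiv ℝ F1 z0).map_smul, hA]
        rw [e1']
        abel
      rw [e1]
      refine (norm_add_le _ _).trans (add_le_add (htay s hs) ?_)
      refine ((fderiv ℝ F1 z0).le_opNorm _).trans ?_
      exact mul_le_mul (hF1d z0) (hz2 s hs) (norm_nonneg _) hK
    -- term 2
    have ht2 : ‖(a * h / 2) • (fderiv ℝ F1 (z s) (W (z s)) - A)‖
        ≤ (a * h / 2) * (2 * (K * K * (M * s))) := by
      rw [norm_smul, Real.norm_eq_abs, abs_of_nonneg (by positivity)]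
      refine mul_le_mul_of_nonneg_left ?_ (by positivity)
      have e2 : fderiv ℝ F1 (z s) (W (z s)) - A
          = (fderiv ℝ F1 (z s) - fderiv ℝ F1 z0) (W (z s))
            + (fderiv ℝ F1 z0) (W (z s) - W z0) := by
        rw [hA, ContinuousLinearMap.sub_apply, map_sub]
        abel
      rw [e2]
      refine (norm_add_le _ _).trans ?_
      have b1 : ‖(fderiv ℝ F1 (z s) - fderiv ℝ F1 z0) (W (z s))‖ ≤ K * (M * s) * K := by
        refine (ContinuousLinearMap.le_opNorm _ _).trans ?_
        exact mul_le_mul ((hF1dlip z0 (z s)).trans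
          (mul_le_mul_of_nonneg_left (hz1 s hs) hK)) (hWb _) (norm_nonneg _)
          (by positivity)
      have b2 : ‖(fderiv ℝ F1 z0) (W (z s) - W z0)‖ ≤ K * (K * (M * s)) := by
        refine (ContinuousLinearMap.le_opNorm _ _).trans ?_
        exact mul_le_mul (hF1d z0) ((hWlip z0 (z s)).trans
          (mul_le_mul_of_nonneg_left (hz1 s hs) hK)) (norm_nonneg _) hK
      nlinarith
    refine (norm_sub_le _ _).trans ?_
    have hfinal : K * (M * s) * (M * s) + K * ((e + K * M * B) * h * s)
        + (a * h / 2) * (2 * (K * K * (M * s))) ≤ (c * B) * h ^ 2 := by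
      have hsh : s ≤ B * h := hsB
      have h1 : K * (M * s) * (M * s) ≤ K * M * M * B * (h * s) := by
        have := mul_le_mul_of_nonneg_left hsh
          (mul_nonneg (mul_nonneg (mul_nonneg hK hM) hM) hsnn)
        linarith [this]
      have h2 : K * ((e + K * M * B) * h * s) = K * (e + K * M * B) * (h * s) := by ring
      have h3 : (a * h / 2) * (2 * (K * K * (M * s))) ≤ B * K * K * M * (h * s) := by
        have := mul_le_mul_of_nonneg_right haB
          (mul_nonneg (mul_nonneg (mul_nonneg (mul_nonneg hh.le hK) hK) hM) hsnn)
        linarith [this]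
      have h4 : h * s ≤ B * h ^ 2 := by
        have := mul_le_mul_of_nonneg_left hsh hh.le
        linarith [this]
      have h5 : 0 ≤ h * s := by positivity
      have hsum : K * (M * s) * (M * s) + K * ((e + K * M * B) * h * s)
          + (a * h / 2) * (2 * (K * K * (M * s)))
          ≤ (K * M * M * B + K * (e + K * M * B) + B * K * K * M) * (h * s) := by
        linarith [h1, h2, h3]
      have h6 := mul_le_mul_of_nonneg_right hc h5
      have h7 := mul_le_mul_of_nonneg_left h4 hc0
      linarith [hsum, h6, h7]
    linarith [ht1, ht2, hfinal]
  -- mean value on [0, a*h]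
  have hmem : a * h ∈ Icc (0:ℝ) (a * h) := ⟨by positivity, le_rfl⟩
  have hbound : ∀ s ∈ Icc (0:ℝ) (a * h),
      ‖(F1 (z s) - (a * h / 2) • fderiv ℝ F1 (z s) (W (z s)))
        - (F1 z0 - (a * h / 2) • A) - s • A‖ ≤ (c * B) * h ^ 2 := by
    intro s hs
    exact hwb s ⟨hs.1, le_trans hs.2 hab⟩
  have hfin := curve_bound hwd hbound (a * h) hmem
  have hw0 : w 0 = 0 := by simp [hw]
  have hwah : u 0 + (a * h) • F1 z0 - u (a * h) = -(w (a * h) - w 0) := by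
    rw [hw0, sub_zero]
    show u 0 + (a * h) • F1 z0 - u (a * h)
      = -(u (a * h) - u 0 - (a * h) • (F1 z0 - (a * h / 2) • A)
          - ((a * h) ^ 2 / 2) • A)
    have hsm : ((a * h) ^ 2 / 2) • A = (a * h) • ((a * h / 2) • A) := by
      rw [smul_smul]; congr 1; ring
    rw [smul_sub, hsm]
    abel
  rw [hwah, norm_neg]
  refine hfin.trans ?_
  have h8 := mul_le_mul_of_nonneg_right haB
    (mul_nonneg (mul_nonneg hc0 hB) (pow_nonneg hh.le 3))
  linarith [h8]

end helpers

set_option maxHeartbeats 1000000 in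
/-- **Theorem 3.1 (simultaneous Euler updates).**
The discrete simultaneous Euler updates with learning rates `α h` and `λ h` follow the
modified continuous system
`dφ/ds = f − (αh/2)(f·∇_φ f + g·∇_θ f)`, `dθ/ds = g − (λh/2)(f·∇_φ g + g·∇_θ g)`
with an error of size `O(h³)` after one update step. -/
theorem simultaneous_euler_modified_flow {m n : ℕ}
    (f : EuclideanSpace ℝ (Fin m) × EuclideanSpace ℝ (Fin n) → EuclideanSpace ℝ (Fin m))
    (g : EuclideanSpace ℝ (Fin m) × EuclideanSpace ℝ (Fin n) → EuclideanSpace ℝ (Fin n))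
    (hf : ContDiff ℝ 3 f) (hg : ContDiff ℝ 3 g)
    (hfb : ∀ i : ℕ, i ≤ 3 → ∃ C : ℝ, ∀ z, ‖iteratedFDeriv ℝ i f z‖ ≤ C)
    (hgb : ∀ i : ℕ, i ≤ 3 → ∃ C : ℝ, ∀ z, ‖iteratedFDeriv ℝ i g z‖ ≤ C)
    (α lam : ℝ) (hα : 0 < α) (hlam : 0 < lam)
    (φ0 : EuclideanSpace ℝ (Fin m)) (θ0 : EuclideanSpace ℝ (Fin n))
    -- the solution `s ↦ (φs h s, θs h s)` of the modified continuous system, for step size `h`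
    (φs : ℝ → ℝ → EuclideanSpace ℝ (Fin m))
    (θs : ℝ → ℝ → EuclideanSpace ℝ (Fin n))
    (hinitφ : ∀ h : ℝ, 0 < h → φs h 0 = φ0)
    (hinitθ : ∀ h : ℝ, 0 < h → θs h 0 = θ0)
    (hodeφ : ∀ h : ℝ, 0 < h → ∀ s : ℝ,
      HasDerivAt (φs h)
        (f (φs h s, θs h s) -
          (α * h / 2) • fderiv ℝ f (φs h s, θs h s) (f (φs h s, θs h s), g (φs h s, θs h s))) s)
    (hodeθ : ∀ h : ℝ, 0 < h → ∀ s : ℝ,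
      HasDerivAt (θs h)
        (g (φs h s, θs h s) -
          (lam * h / 2) • fderiv ℝ g (φs h s, θs h s) (f (φs h s, θs h s), g (φs h s, θs h s))) s) :
    ∃ C > (0 : ℝ), ∃ h0 > (0 : ℝ), ∀ h : ℝ, 0 < h → h < h0 →
      ‖(φ0 + (α * h) • f (φ0, θ0)) - φs h (α * h)‖ ≤ C * h ^ 3 ∧
      ‖(θ0 + (lam * h) • g (φ0, θ0)) - θs h (lam * h)‖ ≤ C * h ^ 3 := by
  obtain ⟨Cf0, hCf0⟩ := hfb 0 (by norm_num)
  obtain ⟨Cf1, hCf1⟩ := hfb 1 (by norm_num)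
  obtain ⟨Cf2, hCf2⟩ := hfb 2 (by norm_num)
  obtain ⟨Cg0, hCg0⟩ := hgb 0 (by norm_num)
  obtain ⟨Cg1, hCg1⟩ := hgb 1 (by norm_num)
  obtain ⟨Cg2, hCg2⟩ := hgb 2 (by norm_num)
  obtain ⟨K, hKdef⟩ : ∃ K : ℝ, K = 1 + (|Cf0| + |Cg0| + |Cf1| + |Cg1| + |Cf2| + |Cg2|) :=
    ⟨_, rfl⟩
  have habs : ∀ x : ℝ, x ≤ |x| := fun x => le_abs_self x
  have habs0 : ∀ x : ℝ, (0:ℝ) ≤ |x| := fun x => abs_nonneg x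
  have hK1 : (1:ℝ) ≤ K := by
    rw [hKdef]
    linarith [habs0 Cf0, habs0 Cg0, habs0 Cf1, habs0 Cg1, habs0 Cf2, habs0 Cg2]
  have hK0 : (0:ℝ) < K := lt_of_lt_of_le one_pos hK1
  have hKf0 : Cf0 ≤ K := by
    rw [hKdef]
    linarith [habs Cf0, habs0 Cg0, habs0 Cf1, habs0 Cg1, habs0 Cf2, habs0 Cg2]
  have hKf1 : Cf1 ≤ K := by
    rw [hKdef]
    linarith [habs Cf1, habs0 Cg0, habs0 Cf0, habs0 Cg1, habs0 Cf2, habs0 Cg2]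
  have hKf2 : Cf2 ≤ K := by
    rw [hKdef]
    linarith [habs Cf2, habs0 Cg0, habs0 Cf0, habs0 Cg1, habs0 Cf1, habs0 Cg2]
  have hKg0 : Cg0 ≤ K := by
    rw [hKdef]
    linarith [habs Cg0, habs0 Cf0, habs0 Cf1, habs0 Cg1, habs0 Cf2, habs0 Cg2]
  have hKg1 : Cg1 ≤ K := by
    rw [hKdef]
    linarith [habs Cg1, habs0 Cf0, habs0 Cf1, habs0 Cg0, habs0 Cf2, habs0 Cg2]
  have hKg2 : Cg2 ≤ K := by
    rw [hKdef]
    linarith [habs Cg2, habs0 Cf0, habs0 Cf1, habs0 Cg0, habs0 Cf2, habs0 Cg1]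
  -- basic bounds
  have hfK : ∀ p, ‖f p‖ ≤ K := fun p => by
    have := hCf0 p; rw [norm_iteratedFDeriv_zero] at this; exact this.trans hKf0
  have hgK : ∀ p, ‖g p‖ ≤ K := fun p => by
    have := hCg0 p; rw [norm_iteratedFDeriv_zero] at this; exact this.trans hKg0
  have hfd1 : ∀ p, ‖fderiv ℝ f p‖ ≤ K := fun p => by
    have h1 : ‖fderiv ℝ f p‖ = ‖iteratedFDeriv ℝ 1 f p‖ := by
      rw [← norm_iteratedFDeriv_fderiv (n := 0), norm_iteratedFDeriv_zero]
    rw [h1]; exact (hCf1 p).trans hKf1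
  have hgd1 : ∀ p, ‖fderiv ℝ g p‖ ≤ K := fun p => by
    have h1 : ‖fderiv ℝ g p‖ = ‖iteratedFDeriv ℝ 1 g p‖ := by
      rw [← norm_iteratedFDeriv_fderiv (n := 0), norm_iteratedFDeriv_zero]
    rw [h1]; exact (hCg1 p).trans hKg1
  have hfdd : ∀ p, ‖fderiv ℝ (fderiv ℝ f) p‖ ≤ K := fun p => by
    have h1 : ‖fderiv ℝ (fderiv ℝ f) p‖ = ‖iteratedFDeriv ℝ 2 f p‖ := by
      rw [← norm_iteratedFDeriv_fderiv (n := 1), ← norm_iteratedFDeriv_fderiv (n := 0),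
        norm_iteratedFDeriv_zero]
    rw [h1]; exact (hCf2 p).trans hKf2
  have hgdd : ∀ p, ‖fderiv ℝ (fderiv ℝ g) p‖ ≤ K := fun p => by
    have h1 : ‖fderiv ℝ (fderiv ℝ g) p‖ = ‖iteratedFDeriv ℝ 2 g p‖ := by
      rw [← norm_iteratedFDeriv_fderiv (n := 1), ← norm_iteratedFDeriv_fderiv (n := 0),
        norm_iteratedFDeriv_zero]
    rw [h1]; exact (hCg2 p).trans hKg2
  have hfdiff : Differentiable ℝ f := hf.differentiable (by norm_num)
  have hgdiff : Differentiable ℝ g := hg.differentiable (by norm_num)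
  have hfd_diff : Differentiable ℝ (fderiv ℝ f) :=
    (hf.fderiv_right (m := 2) (by norm_num)).differentiable (by norm_num)
  have hgd_diff : Differentiable ℝ (fderiv ℝ g) :=
    (hg.fderiv_right (m := 2) (by norm_num)).differentiable (by norm_num)
  have hLf := fun p q => lip_of_fderiv_bound hfdiff hfd1 p q
  have hLg := fun p q => lip_of_fderiv_bound hgdiff hgd1 p q
  have hLdf := fun p q => lip_of_fderiv_bound hfd_diff hfdd p q
  have hLdg := fun p q => lip_of_fderiv_bound hgd_diff hgdd p q
  -- bounds on the pair map W p = (f p, g p)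
  have hWb : ∀ p, ‖(f p, g p)‖ ≤ K := fun p => by
    rw [Prod.norm_def]; exact max_le (hfK p) (hgK p)
  have hWlip : ∀ p q, ‖(f q, g q) - (f p, g p)‖ ≤ K * ‖q - p‖ := fun p q => by
    rw [Prod.norm_def]
    exact max_le (by simpa using hLf p q) (by simpa using hLg p q)
  have hGfb : ∀ p, ‖fderiv ℝ f p (f p, g p)‖ ≤ K * K := fun p =>
    ((fderiv ℝ f p).le_opNorm _).trans
      (mul_le_mul (hfd1 p) (hWb p) (norm_nonneg _) hK0.le)
  have hGgb : ∀ p, ‖fderiv ℝ g p (f p, g p)‖ ≤ K * K := fun p =>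
    ((fderiv ℝ g p).le_opNorm _).trans
      (mul_le_mul (hgd1 p) (hWb p) (norm_nonneg _) hK0.le)
  -- constants
  obtain ⟨B, hBdef⟩ : ∃ B : ℝ, B = α + lam := ⟨_, rfl⟩
  have hB0 : (0:ℝ) < B := by rw [hBdef]; exact add_pos hα hlam
  have hαB : α ≤ B := by rw [hBdef]; linarith
  have hlamB : lam ≤ B := by rw [hBdef]; linarith
  obtain ⟨M, hMdef⟩ : ∃ M : ℝ, M = K + B / 2 * (K * K) := ⟨_, rfl⟩
  have hM0 : (0:ℝ) < M := by
    have : (0:ℝ) < B / 2 * (K * K) := by positivity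
    rw [hMdef]; linarith
  obtain ⟨e, hedef⟩ : ∃ e : ℝ, e = B / 2 * (K * K) := ⟨_, rfl⟩
  have he0 : (0:ℝ) < e := by rw [hedef]; positivity
  obtain ⟨c, hcdef⟩ : ∃ c : ℝ, c = K * M * M * B + K * (e + K * M * B) + B * K * K * M :=
    ⟨_, rfl⟩
  have hc0 : (0:ℝ) < c := by
    have h1 : 0 < K * M * M * B := by positivity
    have h2 : 0 < K * (e + K * M * B) := by positivity
    have h3 : 0 < B * K * K * M := by positivity
    rw [hcdef]; linarith
  refine ⟨c * B * B + 1, by positivity, 1, one_pos, ?_⟩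
  intro h hh hh1
  have hh1' : h ≤ 1 := hh1.le
  have hab : α * h ≤ B * h := mul_le_mul_of_nonneg_right hαB hh.le
  have hab' : lam * h ≤ B * h := mul_le_mul_of_nonneg_right hlamB hh.le
  -- joint flow and its derivative
  have hzd : ∀ s : ℝ, HasDerivAt (fun s : ℝ => (φs h s, θs h s))
      ((f (φs h s, θs h s) - (α * h / 2) • fderiv ℝ f (φs h s, θs h s)
          (f (φs h s, θs h s), g (φs h s, θs h s)),
        g (φs h s, θs h s) - (lam * h / 2) • fderiv ℝ g (φs h s, θs h s)
          (f (φs h s, θs h s), g (φs h s, θs h s)))) s :=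
    fun s => (hodeφ h hh s).prodMk (hodeθ h hh s)
  have hz0 : ((φs h 0, θs h 0) : EuclideanSpace ℝ (Fin m) × EuclideanSpace ℝ (Fin n))
      = (φ0, θ0) := by
    rw [hinitφ h hh, hinitθ h hh]
  -- derivative bound along the flow
  have hz'b : ∀ s ∈ Icc (0:ℝ) (B * h),
      ‖(f (φs h s, θs h s) - (α * h / 2) • fderiv ℝ f (φs h s, θs h s)
          (f (φs h s, θs h s), g (φs h s, θs h s)),
        g (φs h s, θs h s) - (lam * h / 2) • fderiv ℝ g (φs h s, θs h s)
          (f (φs h s, θs h s), g (φs h s, θs h s)))‖ ≤ M := by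
    intro s _
    rw [Prod.norm_def]
    have hb1 : ‖f (φs h s, θs h s) - (α * h / 2) • fderiv ℝ f (φs h s, θs h s)
        (f (φs h s, θs h s), g (φs h s, θs h s))‖ ≤ K + (α * h / 2) * (K * K) :=
      comp_bound _ _ _ K (by positivity) (hfK _) (hGfb _)
    have hb2 : ‖g (φs h s, θs h s) - (lam * h / 2) • fderiv ℝ g (φs h s, θs h s)
        (f (φs h s, θs h s), g (φs h s, θs h s))‖ ≤ K + (lam * h / 2) * (K * K) :=
      comp_bound _ _ _ K (by positivity) (hgK _) (hGgb _)
    have hKK : (0:ℝ) ≤ K * K := by positivity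
    have hsm1 : (α * h / 2) * (K * K) ≤ B / 2 * (K * K) := by
      have h1 : α * h ≤ α := mul_le_of_le_one_right hα.le hh1'
      have h2 : α * h / 2 ≤ B / 2 := by linarith only [h1, hαB]
      exact mul_le_mul_of_nonneg_right h2 hKK
    have hsm2 : (lam * h / 2) * (K * K) ≤ B / 2 * (K * K) := by
      have h1 : lam * h ≤ lam := mul_le_of_le_one_right hlam.le hh1'
      have h2 : lam * h / 2 ≤ B / 2 := by linarith only [h1, hlamB]
      exact mul_le_mul_of_nonneg_right h2 hKK
    rw [hMdef]
    exact max_le (by linarith) (by linarith)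
  -- the modification terms are O(h)
  have hz'W : ∀ s ∈ Icc (0:ℝ) (B * h),
      ‖(f (φs h s, θs h s) - (α * h / 2) • fderiv ℝ f (φs h s, θs h s)
          (f (φs h s, θs h s), g (φs h s, θs h s)),
        g (φs h s, θs h s) - (lam * h / 2) • fderiv ℝ g (φs h s, θs h s)
          (f (φs h s, θs h s), g (φs h s, θs h s)))
        - (f (φs h s, θs h s), g (φs h s, θs h s))‖ ≤ e * h := by
    intro s _
    rw [Prod.mk_sub_mk, Prod.norm_def]
    have hd1 : f (φs h s, θs h s) - (α * h / 2) • fderiv ℝ f (φs h s, θs h s)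
        (f (φs h s, θs h s), g (φs h s, θs h s)) - f (φs h s, θs h s)
        = -((α * h / 2) • fderiv ℝ f (φs h s, θs h s)
          (f (φs h s, θs h s), g (φs h s, θs h s))) := by abel
    have hd2 : g (φs h s, θs h s) - (lam * h / 2) • fderiv ℝ g (φs h s, θs h s)
        (f (φs h s, θs h s), g (φs h s, θs h s)) - g (φs h s, θs h s)
        = -((lam * h / 2) • fderiv ℝ g (φs h s, θs h s)
          (f (φs h s, θs h s), g (φs h s, θs h s))) := by abel
    rw [hd1, hd2, norm_neg, norm_neg, norm_smul, norm_smul, Real.norm_eq_abs,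
      Real.norm_eq_abs, abs_of_nonneg (by positivity : (0:ℝ) ≤ α * h / 2),
      abs_of_nonneg (by positivity : (0:ℝ) ≤ lam * h / 2)]
    have hKK : (0:ℝ) ≤ K * K := by positivity
    have hm1 : (α * h / 2) * ‖fderiv ℝ f (φs h s, θs h s)
        (f (φs h s, θs h s), g (φs h s, θs h s))‖ ≤ (α * h / 2) * (K * K) :=
      mul_le_mul_of_nonneg_left (hGfb _) (by positivity)
    have hm2 : (lam * h / 2) * ‖fderiv ℝ g (φs h s, θs h s)
        (f (φs h s, θs h s), g (φs h s, θs h s))‖ ≤ (lam * h / 2) * (K * K) :=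
      mul_le_mul_of_nonneg_left (hGgb _) (by positivity)
    have he1 : (α * h / 2) * (K * K) ≤ e * h := by
      rw [hedef]
      have h1 := mul_le_mul_of_nonneg_right hαB
        (show (0:ℝ) ≤ K * K * h / 2 by positivity)
      linarith only [h1]
    have he2 : (lam * h / 2) * (K * K) ≤ e * h := by
      rw [hedef]
      have h1 := mul_le_mul_of_nonneg_right hlamB
        (show (0:ℝ) ≤ K * K * h / 2 by positivity)
      linarith only [h1]
    exact max_le (by linarith) (by linarith)
  -- apply the key estimate to each player
  have Hφ := key_estimate f (fun p => (f p, g p)) (fun s : ℝ => (φs h s, θs h s))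
    (fun s : ℝ => (f (φs h s, θs h s) - (α * h / 2) • fderiv ℝ f (φs h s, θs h s)
          (f (φs h s, θs h s), g (φs h s, θs h s)),
        g (φs h s, θs h s) - (lam * h / 2) • fderiv ℝ g (φs h s, θs h s)
          (f (φs h s, θs h s), g (φs h s, θs h s))))
    (φs h) (φ0, θ0) K M e α B (B * h) h c
    hK0.le hM0.le he0.le hα hB0.le hh hh1' hab le_rfl (le_of_eq hcdef.symm)
    hfdiff hfd1 hLdf hWb hWlip hzd hz0 hz'b hz'W (fun s => hodeφ h hh s)
  have Hθ := key_estimate g (fun p => (f p, g p)) (fun s : ℝ => (φs h s, θs h s))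
    (fun s : ℝ => (f (φs h s, θs h s) - (α * h / 2) • fderiv ℝ f (φs h s, θs h s)
          (f (φs h s, θs h s), g (φs h s, θs h s)),
        g (φs h s, θs h s) - (lam * h / 2) • fderiv ℝ g (φs h s, θs h s)
          (f (φs h s, θs h s), g (φs h s, θs h s))))
    (θs h) (φ0, θ0) K M e lam B (B * h) h c
    hK0.le hM0.le he0.le hlam hB0.le hh hh1' hab' le_rfl (le_of_eq hcdef.symm)
    hgdiff hgd1 hLdg hWb hWlip hzd hz0 hz'b hz'W (fun s => hodeθ h hh s)
  rw [hinitφ h hh] at Hφ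
  rw [hinitθ h hh] at Hθ
  have hh3 : (0:ℝ) < h ^ 3 := pow_pos hh 3
  have hmono : (c * B * B) * h ^ 3 ≤ (c * B * B + 1) * h ^ 3 :=
    mul_le_mul_of_nonneg_right (le_add_of_nonneg_right zero_le_one) hh3.le
  exact ⟨Hφ.trans hmono, Hθ.trans hmono⟩
end
end

section
/- Let E : ℝ^m × ℝ^n → ℝ be twice continuously differentiable and set f = −∇_φ E, g = −∇_θ E (a common-payoff game). Then the first-order drift corrections of alternating gradient descent with m and k sub-steps per player are gradients of modified losses: −(1/2)((1/m)·f·∇_φ f + g·∇_θ f) = −∇_φ ( (1/(4m))‖∇_φ E‖² + (1/4)‖∇_θ E‖² ) and −(1/2)((1 − 2α/λ)·f·∇_φ g + (1/k)·g·∇_θ g) = −∇_θ ( (1/4)(1 − 2α/λ)‖∇_φ E‖² + (1/(4k))‖∇_θ E‖² ). Consequently the modified system of Theorem 3.2 is the gradient flow dφ/ds = −∇_φ L̃₁, dθ/ds = −∇_θ L̃₂ with L̃₁ = E + (αh/4)((1/m)‖∇_φ E‖² + ‖∇_θ E‖²) and L̃₂ = E + (λh/4)((1 − 2α/λ)‖∇_φ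 E‖² + (1/k)‖∇_θ E‖²). -/
noncomputable section

/-- Gradient with respect to the first player's parameters `φ`. -/
def gradPhi {m n : ℕ}
    (E : EuclideanSpace ℝ (Fin m) × EuclideanSpace ℝ (Fin n) → ℝ)
    (z : EuclideanSpace ℝ (Fin m) × EuclideanSpace ℝ (Fin n)) : EuclideanSpace ℝ (Fin m) :=
  gradient (fun φ => E (φ, z.2)) z.1

/-- Gradient with respect to the second player's parameters `θ`. -/
def gradTheta {m n : ℕ}
    (E : EuclideanSpace ℝ (Fin m) × EuclideanSpace ℝ (Fin n) → ℝ)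
    (z : EuclideanSpace ℝ (Fin m) × EuclideanSpace ℝ (Fin n)) : EuclideanSpace ℝ (Fin n) :=
  gradient (fun θ => E (z.1, θ)) z.2

noncomputable section

open ContinuousLinearMap
open scoped RealInnerProductSpace

namespace CPAux

variable {m n : ℕ}

abbrev Zs (m n : ℕ) := EuclideanSpace ℝ (Fin m) × EuclideanSpace ℝ (Fin n)

private lemma norm_mk_left (u : EuclideanSpace ℝ (Fin m)) :
    ‖((u, 0) : Zs m n)‖ = ‖u‖ := by
  simp [Prod.norm_def]

private lemma norm_mk_right (u : EuclideanSpace ℝ (Fin n)) :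
    ‖((0, u) : Zs m n)‖ = ‖u‖ := by
  simp [Prod.norm_def]

def A1 (m n : ℕ) : (Zs m n →L[ℝ] ℝ) →L[ℝ] EuclideanSpace ℝ (Fin m) :=
  LinearMap.mkContinuous
    { toFun := fun l =>
        (InnerProductSpace.toDual ℝ (EuclideanSpace ℝ (Fin m))).symm (l.comp (inl ℝ _ _))
      map_add' := by intro l₁ l₂; simp [add_comp]
      map_smul' := by intro c l; simp [smul_comp] } 1 (by
        intro l
        rw [one_mul]
        simp only [LinearMap.coe_mk, AddHom.coe_mk, LinearIsometryEquiv.norm_map]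
        refine ContinuousLinearMap.opNorm_le_bound _ (norm_nonneg l) fun u => ?_
        calc ‖(l.comp (inl ℝ _ _)) u‖ = ‖l ((u, 0) : Zs m n)‖ := rfl
        _ ≤ ‖l‖ * ‖((u, 0) : Zs m n)‖ := l.le_opNorm _
        _ = ‖l‖ * ‖u‖ := by rw [norm_mk_left])

def A2 (m n : ℕ) : (Zs m n →L[ℝ] ℝ) →L[ℝ] EuclideanSpace ℝ (Fin n) :=
  LinearMap.mkContinuous
    { toFun := fun l =>
        (InnerProductSpace.toDual ℝ (EuclideanSpace ℝ (Fin n))).symm (l.comp (inr ℝ _ _))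
      map_add' := by intro l₁ l₂; simp [add_comp]
      map_smul' := by intro c l; simp [smul_comp] } 1 (by
        intro l
        rw [one_mul]
        simp only [LinearMap.coe_mk, AddHom.coe_mk, LinearIsometryEquiv.norm_map]
        refine ContinuousLinearMap.opNorm_le_bound _ (norm_nonneg l) fun u => ?_
        calc ‖(l.comp (inr ℝ _ _)) u‖ = ‖l ((0, u) : Zs m n)‖ := rfl
        _ ≤ ‖l‖ * ‖((0, u) : Zs m n)‖ := l.le_opNorm _
        _ = ‖l‖ * ‖u‖ := by rw [norm_mk_right])

lemma A1_inner (l : Zs m n →L[ℝ] ℝ) (u : EuclideanSpace ℝ (Fin m)) :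
    ⟪A1 m n l, u⟫ = l (u, 0) := by
  simp [A1, InnerProductSpace.toDual_symm_apply]

lemma A2_inner (l : Zs m n →L[ℝ] ℝ) (u : EuclideanSpace ℝ (Fin n)) :
    ⟪A2 m n l, u⟫ = l (0, u) := by
  simp [A2, InnerProductSpace.toDual_symm_apply]

end CPAux
namespace CPAux

variable {m n : ℕ}

lemma inner_gradPhi (s : Zs m n → ℝ) {z : Zs m n} (hs : DifferentiableAt ℝ s z)
    (u : EuclideanSpace ℝ (Fin m)) :
    ⟪gradPhi s z, u⟫ = fderiv ℝ s z (u, 0) := by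
  have h1 : HasFDerivAt (fun φ => s (φ, z.2)) ((fderiv ℝ s z).comp (inl ℝ _ _)) z.1 :=
    hs.hasFDerivAt.comp z.1 (hasFDerivAt_prodMk_left z.1 z.2)
  unfold gradPhi gradient
  rw [h1.fderiv, InnerProductSpace.toDual_symm_apply]
  simp

lemma inner_gradTheta (s : Zs m n → ℝ) {z : Zs m n} (hs : DifferentiableAt ℝ s z)
    (u : EuclideanSpace ℝ (Fin n)) :
    ⟪gradTheta s z, u⟫ = fderiv ℝ s z (0, u) := by
  have h1 : HasFDerivAt (fun θ => s (z.1, θ)) ((fderiv ℝ s z).comp (inr ℝ _ _)) z.2 :=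
    hs.hasFDerivAt.comp z.2 (hasFDerivAt_prodMk_right z.1 z.2)
  unfold gradTheta gradient
  rw [h1.fderiv, InnerProductSpace.toDual_symm_apply]
  simp

variable (E : Zs m n → ℝ)

def D2 (z : Zs m n) : Zs m n →L[ℝ] Zs m n →L[ℝ] ℝ := fderiv ℝ (fderiv ℝ E) z

lemma gradPhi_eq (hE : ContDiff ℝ 2 E) (z : Zs m n) :
    gradPhi E z = A1 m n (fderiv ℝ E z) := by
  have hd : DifferentiableAt ℝ E z := (hE.differentiable two_ne_zero) z
  have h1 : HasFDerivAt (fun φ => E (φ, z.2)) ((fderiv ℝ E z).comp (inl ℝ _ _)) z.1 :=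
    hd.hasFDerivAt.comp z.1 (hasFDerivAt_prodMk_left z.1 z.2)
  unfold gradPhi gradient
  rw [h1.fderiv]
  simp [A1]

lemma gradTheta_eq (hE : ContDiff ℝ 2 E) (z : Zs m n) :
    gradTheta E z = A2 m n (fderiv ℝ E z) := by
  have hd : DifferentiableAt ℝ E z := (hE.differentiable two_ne_zero) z
  have h1 : HasFDerivAt (fun θ => E (z.1, θ)) ((fderiv ℝ E z).comp (inr ℝ _ _)) z.2 :=
    hd.hasFDerivAt.comp z.2 (hasFDerivAt_prodMk_right z.1 z.2)
  unfold gradTheta gradient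
  rw [h1.fderiv]
  simp [A2]

lemma hD2 (hE : ContDiff ℝ 2 E) (z : Zs m n) : HasFDerivAt (fderiv ℝ E) (D2 E z) z := by
  have h1 : ContDiff ℝ 1 (fderiv ℝ E) := hE.fderiv_right (by norm_num)
  exact (h1.differentiable one_ne_zero z).hasFDerivAt

lemma D2_symm (hE : ContDiff ℝ 2 E) (z v w : Zs m n) : D2 E z v w = D2 E z w v :=
  second_derivative_symmetric (fun y => ((hE.differentiable two_ne_zero) y).hasFDerivAt)
    (hD2 E hE z) v w

lemma hasF (hE : ContDiff ℝ 2 E) (z : Zs m n) :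
    HasFDerivAt (fun w => gradPhi E w) ((A1 m n).comp (D2 E z)) z := by
  have h := ((A1 m n).hasFDerivAt).comp z (hD2 E hE z)
  exact h.congr_of_eventuallyEq (Filter.Eventually.of_forall fun w => gradPhi_eq E hE w)

lemma hasG (hE : ContDiff ℝ 2 E) (z : Zs m n) :
    HasFDerivAt (fun w => gradTheta E w) ((A2 m n).comp (D2 E z)) z := by
  have h := ((A2 m n).hasFDerivAt).comp z (hD2 E hE z)
  exact h.congr_of_eventuallyEq (Filter.Eventually.of_forall fun w => gradTheta_eq E hE w)

lemma inner_fderiv_F (hE : ContDiff ℝ 2 E) (z w : Zs m n) (u : EuclideanSpace ℝ (Fin m)) :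
    ⟪fderiv ℝ (fun w => gradPhi E w) z w, u⟫ = D2 E z w (u, 0) := by
  rw [(hasF E hE z).fderiv]
  exact A1_inner _ u

lemma inner_fderiv_G (hE : ContDiff ℝ 2 E) (z w : Zs m n) (u : EuclideanSpace ℝ (Fin n)) :
    ⟪fderiv ℝ (fun w => gradTheta E w) z w, u⟫ = D2 E z w (0, u) := by
  rw [(hasG E hE z).fderiv]
  exact A2_inner _ u

lemma hasNormSqF (hE : ContDiff ℝ 2 E) (z : Zs m n) :
    HasFDerivAt (fun w => ‖gradPhi E w‖ ^ 2)
      ((fderivInnerCLM ℝ (gradPhi E z, gradPhi E z)).comp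
        (((A1 m n).comp (D2 E z)).prod ((A1 m n).comp (D2 E z)))) z := by
  have heq : (fun w : Zs m n => ‖gradPhi E w‖ ^ 2) = fun w => ⟪gradPhi E w, gradPhi E w⟫ :=
    funext fun w => (real_inner_self_eq_norm_sq _).symm
  rw [heq]
  exact (hasF E hE z).inner ℝ (hasF E hE z)

lemma hasNormSqG (hE : ContDiff ℝ 2 E) (z : Zs m n) :
    HasFDerivAt (fun w => ‖gradTheta E w‖ ^ 2)
      ((fderivInnerCLM ℝ (gradTheta E z, gradTheta E z)).comp
        (((A2 m n).comp (D2 E z)).prod ((A2 m n).comp (D2 E z)))) z := by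
  have heq : (fun w : Zs m n => ‖gradTheta E w‖ ^ 2) = fun w => ⟪gradTheta E w, gradTheta E w⟫ :=
    funext fun w => (real_inner_self_eq_norm_sq _).symm
  rw [heq]
  exact (hasG E hE z).inner ℝ (hasG E hE z)

lemma diff_nsF (hE : ContDiff ℝ 2 E) (z : Zs m n) :
    DifferentiableAt ℝ (fun w => ‖gradPhi E w‖ ^ 2) z :=
  (hasNormSqF E hE z).differentiableAt

lemma diff_nsG (hE : ContDiff ℝ 2 E) (z : Zs m n) :
    DifferentiableAt ℝ (fun w => ‖gradTheta E w‖ ^ 2) z :=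
  (hasNormSqG E hE z).differentiableAt

lemma fderiv_nsF (hE : ContDiff ℝ 2 E) (z v : Zs m n) :
    fderiv ℝ (fun w => ‖gradPhi E w‖ ^ 2) z v = 2 * D2 E z v (gradPhi E z, 0) := by
  rw [(hasNormSqF E hE z).fderiv]
  have h1 : ⟪A1 m n (D2 E z v), gradPhi E z⟫ = D2 E z v (gradPhi E z, 0) := A1_inner _ _
  have h2 : ⟪gradPhi E z, A1 m n (D2 E z v)⟫ = D2 E z v (gradPhi E z, 0) := by
    rw [real_inner_comm]; exact h1
  simp only [ContinuousLinearMap.coe_comp', Function.comp_apply,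
    ContinuousLinearMap.prod_apply, fderivInnerCLM_apply, h1, h2]
  ring

lemma fderiv_nsG (hE : ContDiff ℝ 2 E) (z v : Zs m n) :
    fderiv ℝ (fun w => ‖gradTheta E w‖ ^ 2) z v = 2 * D2 E z v (0, gradTheta E z) := by
  rw [(hasNormSqG E hE z).fderiv]
  have h1 : ⟪A2 m n (D2 E z v), gradTheta E z⟫ = D2 E z v (0, gradTheta E z) := A2_inner _ _
  have h2 : ⟪gradTheta E z, A2 m n (D2 E z v)⟫ = D2 E z v (0, gradTheta E z) := by
    rw [real_inner_comm]; exact h1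
  simp only [ContinuousLinearMap.coe_comp', Function.comp_apply,
    ContinuousLinearMap.prod_apply, fderivInnerCLM_apply, h1, h2]
  ring

end CPAux
/-- **Corollary 5.1 (common-payoff alternating gradient descent).**
In a common-payoff game (`f = −∇_φ E`, `g = −∇_θ E`), the first-order drift corrections of
alternating gradient descent are gradients of modified losses, and consequently the modified
system of Theorem 3.2 is the gradient flow of
`L̃₁ = E + (αh/4)((1/m)‖∇_φ E‖² + ‖∇_θ E‖²)` and
`L̃₂ = E + (λh/4)((1 − 2α/λ)‖∇_φ E‖² + (1/k)‖∇_θ E‖²)`. -/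
theorem common_payoff_alternating_modified_losses {m n : ℕ}
    (E : EuclideanSpace ℝ (Fin m) × EuclideanSpace ℝ (Fin n) → ℝ)
    (hE : ContDiff ℝ 2 E)
    (α lam h : ℝ) (hα : 0 < α) (hlam : 0 < lam) (hh : 0 < h)
    (msub ksub : ℕ) (hmsub : 0 < msub) (hksub : 0 < ksub)
    (f : EuclideanSpace ℝ (Fin m) × EuclideanSpace ℝ (Fin n) → EuclideanSpace ℝ (Fin m))
    (g : EuclideanSpace ℝ (Fin m) × EuclideanSpace ℝ (Fin n) → EuclideanSpace ℝ (Fin n))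
    (hfdef : f = fun z => -gradPhi E z) (hgdef : g = fun z => -gradTheta E z) :
    ∀ z : EuclideanSpace ℝ (Fin m) × EuclideanSpace ℝ (Fin n),
      -- drift correction of the first player is a gradient
      (-(1 / 2 : ℝ)) •
          ((1 / (msub : ℝ)) • fderiv ℝ f z (f z, 0) + fderiv ℝ f z (0, g z)) =
        -gradPhi (fun w =>
          (1 / (4 * (msub : ℝ))) * ‖gradPhi E w‖ ^ 2 + (1 / 4) * ‖gradTheta E w‖ ^ 2) z ∧
      -- drift correction of the second player is a gradient
      (-(1 / 2 : ℝ)) •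
          ((1 - 2 * α / lam) • fderiv ℝ g z (f z, 0) +
            (1 / (ksub : ℝ)) • fderiv ℝ g z (0, g z)) =
        -gradTheta (fun w =>
          (1 / 4) * (1 - 2 * α / lam) * ‖gradPhi E w‖ ^ 2 +
            (1 / (4 * (ksub : ℝ))) * ‖gradTheta E w‖ ^ 2) z ∧
      -- the modified system is the gradient flow of the modified losses
      f z - (α * h / 2) •
          ((1 / (msub : ℝ)) • fderiv ℝ f z (f z, 0) + fderiv ℝ f z (0, g z)) =
        -gradPhi (fun w =>
          E w + (α * h / 4) *
            ((1 / (msub : ℝ)) * ‖gradPhi E w‖ ^ 2 + ‖gradTheta E w‖ ^ 2)) z ∧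
      g z - (lam * h / 2) •
          ((1 - 2 * α / lam) • fderiv ℝ g z (f z, 0) +
            (1 / (ksub : ℝ)) • fderiv ℝ g z (0, g z)) =
        -gradTheta (fun w =>
          E w + (lam * h / 4) *
            ((1 - 2 * α / lam) * ‖gradPhi E w‖ ^ 2 +
              (1 / (ksub : ℝ)) * ‖gradTheta E w‖ ^ 2)) z := by
  subst hfdef hgdef
  intro z
  have hEd : Differentiable ℝ E := hE.differentiable two_ne_zero
  have negPhi : ∀ x : EuclideanSpace ℝ (Fin m),
      ((-x, (0 : EuclideanSpace ℝ (Fin n))) : CPAux.Zs m n) = -((x, 0) : CPAux.Zs m n) := by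
    intro x; simp [Prod.ext_iff]
  have negTheta : ∀ x : EuclideanSpace ℝ (Fin n),
      (((0 : EuclideanSpace ℝ (Fin m)), -x) : CPAux.Zs m n) = -((0, x) : CPAux.Zs m n) := by
    intro x; simp [Prod.ext_iff]
  have kF : ∀ (v : CPAux.Zs m n) (u : EuclideanSpace ℝ (Fin m)),
      ⟪fderiv ℝ (fun w => -gradPhi E w) z v, u⟫ = -(CPAux.D2 E z v (u, 0)) := by
    intro v u
    rw [fderiv_fun_neg, ContinuousLinearMap.neg_apply, inner_neg_left, CPAux.inner_fderiv_F E hE]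
  have kG : ∀ (v : CPAux.Zs m n) (u : EuclideanSpace ℝ (Fin n)),
      ⟪fderiv ℝ (fun w => -gradTheta E w) z v, u⟫ = -(CPAux.D2 E z v (0, u)) := by
    intro v u
    rw [fderiv_fun_neg, ContinuousLinearMap.neg_apply, inner_neg_left, CPAux.inner_fderiv_G E hE]
  have kF1 : ∀ u, ⟪fderiv ℝ (fun w => -gradPhi E w) z (-gradPhi E z, 0), u⟫
      = CPAux.D2 E z (gradPhi E z, 0) (u, 0) := by
    intro u; rw [kF, negPhi, map_neg, ContinuousLinearMap.neg_apply, neg_neg]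
  have kF2 : ∀ u, ⟪fderiv ℝ (fun w => -gradPhi E w) z (0, -gradTheta E z), u⟫
      = CPAux.D2 E z (0, gradTheta E z) (u, 0) := by
    intro u; rw [kF, negTheta, map_neg, ContinuousLinearMap.neg_apply, neg_neg]
  have kG1 : ∀ u, ⟪fderiv ℝ (fun w => -gradTheta E w) z (-gradPhi E z, 0), u⟫
      = CPAux.D2 E z (gradPhi E z, 0) (0, u) := by
    intro u; rw [kG, negPhi, map_neg, ContinuousLinearMap.neg_apply, neg_neg]
  have kG2 : ∀ u, ⟪fderiv ℝ (fun w => -gradTheta E w) z (0, -gradTheta E z), u⟫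
      = CPAux.D2 E z (0, gradTheta E z) (0, u) := by
    intro u; rw [kG, negTheta, map_neg, ContinuousLinearMap.neg_apply, neg_neg]
  have dF := CPAux.diff_nsF E hE
  have dG := CPAux.diff_nsG E hE
  have r1 : ∀ u, ⟪gradPhi (fun w =>
        (1 / (4 * (msub : ℝ))) * ‖gradPhi E w‖ ^ 2 + (1 / 4) * ‖gradTheta E w‖ ^ 2) z, u⟫
      = (1 / (4 * (msub : ℝ))) * (2 * CPAux.D2 E z (gradPhi E z, 0) (u, 0))
        + (1 / 4) * (2 * CPAux.D2 E z (0, gradTheta E z) (u, 0)) := by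
    intro u
    rw [CPAux.inner_gradPhi _ (((dF z).const_mul _).fun_add ((dG z).const_mul _)),
        fderiv_fun_add ((dF z).const_mul _) ((dG z).const_mul _),
        fderiv_const_mul (dF z), fderiv_const_mul (dG z)]
    simp only [ContinuousLinearMap.add_apply, ContinuousLinearMap.coe_smul',
      Pi.smul_apply, smul_eq_mul]
    rw [CPAux.fderiv_nsF E hE, CPAux.fderiv_nsG E hE,
        CPAux.D2_symm E hE z (u, 0) (gradPhi E z, 0),
        CPAux.D2_symm E hE z (u, 0) (0, gradTheta E z)]
  have r2 : ∀ u, ⟪gradTheta (fun w =>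
        (1 / 4) * (1 - 2 * α / lam) * ‖gradPhi E w‖ ^ 2 +
          (1 / (4 * (ksub : ℝ))) * ‖gradTheta E w‖ ^ 2) z, u⟫
      = (1 / 4) * (1 - 2 * α / lam) * (2 * CPAux.D2 E z (gradPhi E z, 0) (0, u))
        + (1 / (4 * (ksub : ℝ))) * (2 * CPAux.D2 E z (0, gradTheta E z) (0, u)) := by
    intro u
    rw [CPAux.inner_gradTheta _ (((dF z).const_mul _).fun_add ((dG z).const_mul _)),
        fderiv_fun_add ((dF z).const_mul _) ((dG z).const_mul _),
        fderiv_const_mul (dF z), fderiv_const_mul (dG z)]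
    simp only [ContinuousLinearMap.add_apply, ContinuousLinearMap.coe_smul',
      Pi.smul_apply, smul_eq_mul]
    rw [CPAux.fderiv_nsF E hE, CPAux.fderiv_nsG E hE,
        CPAux.D2_symm E hE z (0, u) (gradPhi E z, 0),
        CPAux.D2_symm E hE z (0, u) (0, gradTheta E z)]
  have r3 : ∀ u, ⟪gradPhi (fun w =>
        E w + (α * h / 4) *
          ((1 / (msub : ℝ)) * ‖gradPhi E w‖ ^ 2 + ‖gradTheta E w‖ ^ 2)) z, u⟫
      = fderiv ℝ E z (u, 0) + (α * h / 4) *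
          ((1 / (msub : ℝ)) * (2 * CPAux.D2 E z (gradPhi E z, 0) (u, 0))
            + 2 * CPAux.D2 E z (0, gradTheta E z) (u, 0)) := by
    intro u
    have d1 : DifferentiableAt ℝ
        (fun w => (1 / (msub : ℝ)) * ‖gradPhi E w‖ ^ 2 + ‖gradTheta E w‖ ^ 2) z :=
      ((dF z).const_mul _).add (dG z)
    rw [CPAux.inner_gradPhi _ ((hEd z).fun_add (d1.const_mul _)),
        fderiv_fun_add (hEd z) (d1.const_mul _), fderiv_const_mul d1,
        fderiv_fun_add ((dF z).const_mul _) (dG z), fderiv_const_mul (dF z)]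
    simp only [ContinuousLinearMap.add_apply, ContinuousLinearMap.coe_smul',
      Pi.smul_apply, smul_eq_mul]
    rw [CPAux.fderiv_nsF E hE, CPAux.fderiv_nsG E hE,
        CPAux.D2_symm E hE z (u, 0) (gradPhi E z, 0),
        CPAux.D2_symm E hE z (u, 0) (0, gradTheta E z)]
  have r4 : ∀ u, ⟪gradTheta (fun w =>
        E w + (lam * h / 4) *
          ((1 - 2 * α / lam) * ‖gradPhi E w‖ ^ 2 +
            (1 / (ksub : ℝ)) * ‖gradTheta E w‖ ^ 2)) z, u⟫
      = fderiv ℝ E z (0, u) + (lam * h / 4) *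
          ((1 - 2 * α / lam) * (2 * CPAux.D2 E z (gradPhi E z, 0) (0, u))
            + (1 / (ksub : ℝ)) * (2 * CPAux.D2 E z (0, gradTheta E z) (0, u))) := by
    intro u
    have d1 : DifferentiableAt ℝ
        (fun w => (1 - 2 * α / lam) * ‖gradPhi E w‖ ^ 2 +
          (1 / (ksub : ℝ)) * ‖gradTheta E w‖ ^ 2) z :=
      ((dF z).const_mul _).add ((dG z).const_mul _)
    rw [CPAux.inner_gradTheta _ ((hEd z).fun_add (d1.const_mul _)),
        fderiv_fun_add (hEd z) (d1.const_mul _), fderiv_const_mul d1,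
        fderiv_fun_add ((dF z).const_mul _) ((dG z).const_mul _),
        fderiv_const_mul (dF z), fderiv_const_mul (dG z)]
    simp only [ContinuousLinearMap.add_apply, ContinuousLinearMap.coe_smul',
      Pi.smul_apply, smul_eq_mul]
    rw [CPAux.fderiv_nsF E hE, CPAux.fderiv_nsG E hE,
        CPAux.D2_symm E hE z (0, u) (gradPhi E z, 0),
        CPAux.D2_symm E hE z (0, u) (0, gradTheta E z)]
  have iE1 : ∀ u, ⟪gradPhi E z, u⟫ = fderiv ℝ E z (u, 0) :=
    fun u => CPAux.inner_gradPhi E (hEd z) u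
  have iE2 : ∀ u, ⟪gradTheta E z, u⟫ = fderiv ℝ E z (0, u) :=
    fun u => CPAux.inner_gradTheta E (hEd z) u
  beta_reduce
  refine ⟨?_, ?_, ?_, ?_⟩
  · apply ext_inner_right ℝ
    intro u
    rw [real_inner_smul_left, inner_add_left, real_inner_smul_left, kF1, kF2,
        inner_neg_left, r1]
    ring
  · apply ext_inner_right ℝ
    intro u
    rw [real_inner_smul_left, inner_add_left, real_inner_smul_left, real_inner_smul_left,
        kG1, kG2, inner_neg_left, r2]
    ring
  · apply ext_inner_right ℝ
    intro u
    rw [inner_sub_left, real_inner_smul_left, inner_add_left, real_inner_smul_left,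
        kF1, kF2, inner_neg_left, iE1, inner_neg_left, r3]
    ring
  · apply ext_inner_right ℝ
    intro u
    rw [inner_sub_left, real_inner_smul_left, inner_add_left, real_inner_smul_left,
        real_inner_smul_left, kG1, kG2, inner_neg_left, iE2, inner_neg_left, r4]
    ring
end
end
end

section
/- Let E : ℝ^m × ℝ^n → ℝ be twice continuously differentiable and set f = ∇_φ E, g = −∇_θ E (a zero-sum game with losses L₁ = −E, L₂ = E). Then the first-order drift corrections of simultaneous gradient descent are gradients of modified losses: −(1/2)(f·∇_φ f + g·∇_θ f) = −∇_φ ( (1/4)‖∇_φ E‖² − (1/4)‖∇_θ E‖² ) and −(1/2)(f·∇_φ g + g·∇_θ g) = −∇_θ ( −(1/4)‖∇_φ E‖² + (1/4)‖∇_θ E‖² ). Consequently the modified system of Theorem 3.1 is the gradient flow dφ/ds = −∇_φ L̃₁, dθ/ds = −∇_θ L̃₂ with L̃₁ = −E + (αh/4)‖∇_φ E‖² − (αh/4)‖∇_θ E‖² and L̃₂ = E − (λh/4)‖∇_φ E‖² + (λh/4)‖∇_θ E‖². -/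
noncomputable section

namespace ZeroSumAux

open InnerProductSpace ContinuousLinearMap
open scoped RealInnerProductSpace

variable {m n : ℕ} (E : EuclideanSpace ℝ (Fin m) × EuclideanSpace ℝ (Fin n) → ℝ)

local notation "ES" k => EuclideanSpace ℝ (Fin k)
local notation "Hsp" => (EuclideanSpace ℝ (Fin m)) × (EuclideanSpace ℝ (Fin n))

/-- The partial Fréchet derivative in `φ`. -/
lemma fderiv_partial_phi (hE : Differentiable ℝ E) (w : Hsp) :
    HasFDerivAt (fun φ : ES m => E (φ, w.2))
      ((fderiv ℝ E w).comp (inl ℝ (ES m) (ES n))) w.1 := by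
  have h := (hE w).hasFDerivAt
  have h2 := hasFDerivAt_prodMk_left (𝕜 := ℝ) w.1 w.2
  have := h.comp w.1 (by simpa using h2)
  exact this

lemma fderiv_partial_theta (hE : Differentiable ℝ E) (w : Hsp) :
    HasFDerivAt (fun θ : ES n => E (w.1, θ))
      ((fderiv ℝ E w).comp (inr ℝ (ES m) (ES n))) w.2 := by
  have h := (hE w).hasFDerivAt
  have h2 := hasFDerivAt_prodMk_right (𝕜 := ℝ) w.1 w.2
  have := h.comp w.2 (by simpa using h2)
  exact this

lemma gradPhi_eq (hE : Differentiable ℝ E) (w : Hsp) :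
    gradPhi E w = (toDual ℝ (ES m)).symm ((fderiv ℝ E w).comp (inl ℝ (ES m) (ES n))) := by
  rw [gradPhi, gradient, (fderiv_partial_phi E hE w).fderiv]

lemma gradTheta_eq (hE : Differentiable ℝ E) (w : Hsp) :
    gradTheta E w = (toDual ℝ (ES n)).symm ((fderiv ℝ E w).comp (inr ℝ (ES m) (ES n))) := by
  rw [gradTheta, gradient, (fderiv_partial_theta E hE w).fderiv]

lemma inner_gradPhi (hE : Differentiable ℝ E) (w : Hsp) (v : ES m) :
    ⟪gradPhi E w, v⟫ = fderiv ℝ E w (v, 0) := by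
  rw [gradPhi_eq E hE w, toDual_symm_apply]
  simp

lemma inner_gradTheta (hE : Differentiable ℝ E) (w : Hsp) (v : ES n) :
    ⟪gradTheta E w, v⟫ = fderiv ℝ E w (0, v) := by
  rw [gradTheta_eq E hE w, toDual_symm_apply]
  simp

section C2

variable (hE : ContDiff ℝ 2 E)
include hE

lemma hEd : Differentiable ℝ E :=
  hE.differentiable (by norm_num)

lemma hE'c : ContDiff ℝ 1 (fderiv ℝ E) :=
  hE.fderiv_right (le_refl 2)

lemma hE'd : Differentiable ℝ (fderiv ℝ E) :=
  (hE'c E hE).differentiable one_ne_zero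

/-- symmetry of the second derivative -/
lemma D2symm (z : Hsp) (u v : Hsp) :
    fderiv ℝ (fderiv ℝ E) z u v = fderiv ℝ (fderiv ℝ E) z v u :=
  second_derivative_symmetric (fun y => ((hEd E hE) y).hasFDerivAt)
    ((hE'd E hE z).hasFDerivAt) u v

/-- `gradPhi E` as a composition. -/
lemma gradPhi_comp :
    (fun w => gradPhi E w) = ⇑(toDual ℝ (ES m)).symm ∘
      (⇑((compL ℝ (ES m) Hsp ℝ).flip (inl ℝ (ES m) (ES n))) ∘ fderiv ℝ E) := by
  funext w
  simp [gradPhi_eq E (hEd E hE) w, compL_apply, flip_apply]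

lemma gradTheta_comp :
    (fun w => gradTheta E w) = ⇑(toDual ℝ (ES n)).symm ∘
      (⇑((compL ℝ (ES n) Hsp ℝ).flip (inr ℝ (ES m) (ES n))) ∘ fderiv ℝ E) := by
  funext w
  simp [gradTheta_eq E (hEd E hE) w, compL_apply, flip_apply]

lemma gradPhi_contDiff : ContDiff ℝ 1 (fun w => gradPhi E w) := by
  rw [gradPhi_comp E hE]
  exact (toDual ℝ (ES m)).symm.contDiff.comp
    ((((compL ℝ (ES m) Hsp ℝ).flip (inl ℝ (ES m) (ES n))).contDiff).comp (hE'c E hE))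

lemma gradTheta_contDiff : ContDiff ℝ 1 (fun w => gradTheta E w) := by
  rw [gradTheta_comp E hE]
  exact (toDual ℝ (ES n)).symm.contDiff.comp
    ((((compL ℝ (ES n) Hsp ℝ).flip (inr ℝ (ES m) (ES n))).contDiff).comp (hE'c E hE))

lemma keyPhi (z : Hsp) (u : Hsp) (v : ES m) :
    ⟪fderiv ℝ (fun w => gradPhi E w) z u, v⟫ = fderiv ℝ (fderiv ℝ E) z u (v, 0) := by
  rw [gradPhi_comp E hE]
  set P := (compL ℝ (ES m) Hsp ℝ).flip (inl ℝ (ES m) (ES n)) with hP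
  have h1 : fderiv ℝ (⇑P ∘ fderiv ℝ E) z = P.comp (fderiv ℝ (fderiv ℝ E) z) :=
    (P.hasFDerivAt.comp z ((hE'd E hE) z).hasFDerivAt).fderiv
  have h2 : fderiv ℝ (⇑(toDual ℝ _).symm ∘ (⇑P ∘ fderiv ℝ E)) z u =
      (toDual ℝ _).symm (P (fderiv ℝ (fderiv ℝ E) z u)) := by
    rw [LinearIsometryEquiv.comp_fderiv, h1]; rfl
  rw [h2, toDual_symm_apply]
  simp [hP, compL_apply, flip_apply]

lemma keyTheta (z : Hsp) (u : Hsp) (v : ES n) :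
    ⟪fderiv ℝ (fun w => gradTheta E w) z u, v⟫ = fderiv ℝ (fderiv ℝ E) z u (0, v) := by
  rw [gradTheta_comp E hE]
  set P := (compL ℝ (ES n) Hsp ℝ).flip (inr ℝ (ES m) (ES n)) with hP
  have h1 : fderiv ℝ (⇑P ∘ fderiv ℝ E) z = P.comp (fderiv ℝ (fderiv ℝ E) z) :=
    (P.hasFDerivAt.comp z ((hE'd E hE) z).hasFDerivAt).fderiv
  have h2 : fderiv ℝ (⇑(toDual ℝ _).symm ∘ (⇑P ∘ fderiv ℝ E)) z u =
      (toDual ℝ _).symm (P (fderiv ℝ (fderiv ℝ E) z u)) := by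
    rw [LinearIsometryEquiv.comp_fderiv, h1]; rfl
  rw [h2, toDual_symm_apply]
  simp [hP, compL_apply, flip_apply]

/-- Master computation: the `φ`-gradient of `a•E + b‖∇φE‖² + c‖∇θE‖²`. -/
lemma gradPhi_master (a b c : ℝ) (z : Hsp) :
    gradPhi (fun w => a * E w + b * ‖gradPhi E w‖ ^ 2 + c * ‖gradTheta E w‖ ^ 2) z =
      a • gradPhi E z
        + (2 * b) • fderiv ℝ (fun w => gradPhi E w) z (gradPhi E z, 0)
        + (2 * c) • fderiv ℝ (fun w => gradPhi E w) z (0, gradTheta E z) := by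
  have hEd' := hEd E hE
  set DF := fderiv ℝ (fun w => gradPhi E w) z with hDF
  set DG := fderiv ℝ (fun w => gradTheta E w) z with hDG
  set F := gradPhi E z with hF
  set G := gradTheta E z with hG
  set X := a • F + (2 * b) • DF (F, 0) + (2 * c) • DF (0, G) with hX
  have hι : HasFDerivAt (fun φ : ES m => (φ, z.2)) (inl ℝ (ES m) (ES n)) z.1 :=
    hasFDerivAt_prodMk_left z.1 z.2
  have hFat : HasFDerivAt (fun w => gradPhi E w) DF z :=
    (((gradPhi_contDiff E hE).differentiable one_ne_zero) z).hasFDerivAt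
  have hGat : HasFDerivAt (fun w => gradTheta E w) DG z :=
    (((gradTheta_contDiff E hE).differentiable one_ne_zero) z).hasFDerivAt
  have hFι : HasFDerivAt (fun φ : ES m => gradPhi E (φ, z.2))
      (DF.comp (inl ℝ (ES m) (ES n))) z.1 := by
    have := hFat.comp z.1 hι; exact this
  have hGι : HasFDerivAt (fun φ : ES m => gradTheta E (φ, z.2))
      (DG.comp (inl ℝ (ES m) (ES n))) z.1 := by
    have := hGat.comp z.1 hι; exact this
  have h1 : HasFDerivAt (fun φ : ES m => E (φ, z.2))
      ((fderiv ℝ E z).comp (inl ℝ (ES m) (ES n))) z.1 := fderiv_partial_phi E hEd' z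
  have hin1 : HasFDerivAt (fun φ : ES m => ⟪gradPhi E (φ, z.2), gradPhi E (φ, z.2)⟫)
      ((fderivInnerCLM ℝ (F, F)).comp
        ((DF.comp (inl ℝ (ES m) (ES n))).prod (DF.comp (inl ℝ (ES m) (ES n))))) z.1 :=
    hFι.inner ℝ hFι
  have hin2 : HasFDerivAt (fun φ : ES m => ⟪gradTheta E (φ, z.2), gradTheta E (φ, z.2)⟫)
      ((fderivInnerCLM ℝ (G, G)).comp
        ((DG.comp (inl ℝ (ES m) (ES n))).prod (DG.comp (inl ℝ (ES m) (ES n))))) z.1 :=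
    hGι.inner ℝ hGι
  have hn1 : HasFDerivAt (fun φ : ES m => ‖gradPhi E (φ, z.2)‖ ^ 2)
      ((fderivInnerCLM ℝ (F, F)).comp
        ((DF.comp (inl ℝ (ES m) (ES n))).prod (DF.comp (inl ℝ (ES m) (ES n))))) z.1 := by
    have heq : (fun φ : ES m => ‖gradPhi E (φ, z.2)‖ ^ 2)
        = fun φ : ES m => ⟪gradPhi E (φ, z.2), gradPhi E (φ, z.2)⟫ :=
      funext fun φ => (real_inner_self_eq_norm_sq _).symm
    rw [heq]; exact hin1
  have hn2 : HasFDerivAt (fun φ : ES m => ‖gradTheta E (φ, z.2)‖ ^ 2)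
      ((fderivInnerCLM ℝ (G, G)).comp
        ((DG.comp (inl ℝ (ES m) (ES n))).prod (DG.comp (inl ℝ (ES m) (ES n))))) z.1 := by
    have heq : (fun φ : ES m => ‖gradTheta E (φ, z.2)‖ ^ 2)
        = fun φ : ES m => ⟪gradTheta E (φ, z.2), gradTheta E (φ, z.2)⟫ :=
      funext fun φ => (real_inner_self_eq_norm_sq _).symm
    rw [heq]; exact hin2
  have htot := ((h1.const_mul a).add (hn1.const_mul b)).add (hn2.const_mul c)
  have hXD : toDual ℝ (ES m) X =
      a • ((fderiv ℝ E z).comp (inl ℝ (ES m) (ES n)))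
        + b • ((fderivInnerCLM ℝ (F, F)).comp
            ((DF.comp (inl ℝ (ES m) (ES n))).prod (DF.comp (inl ℝ (ES m) (ES n)))))
        + c • ((fderivInnerCLM ℝ (G, G)).comp
            ((DG.comp (inl ℝ (ES m) (ES n))).prod (DG.comp (inl ℝ (ES m) (ES n))))) := by
    apply ContinuousLinearMap.ext; intro v
    have e1 : ⟪F, v⟫ = fderiv ℝ E z (v, 0) := inner_gradPhi E hEd' z v
    have e2 : ⟪DF (v, 0), F⟫ = ⟪DF (F, 0), v⟫ := by
      rw [keyPhi E hE z (v, 0) F, D2symm E hE z (v, 0) ((F : ES m), (0 : ES n)),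
        ← keyPhi E hE z (F, 0) v]
    have e3 : ⟪DG (v, 0), G⟫ = ⟪DF (0, G), v⟫ := by
      rw [keyTheta E hE z (v, 0) G, D2symm E hE z (v, 0) ((0 : ES m), (G : ES n)),
        ← keyPhi E hE z (0, G) v]
    simp only [toDual_apply_apply, ContinuousLinearMap.add_apply, ContinuousLinearMap.smul_apply,
      ContinuousLinearMap.comp_apply, ContinuousLinearMap.prod_apply, fderivInnerCLM_apply,
      inl_apply, smul_eq_mul, hX]
    rw [inner_add_left, inner_add_left, real_inner_smul_left, real_inner_smul_left,
      real_inner_smul_left, e1]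
    have c1 : ⟪F, DF (v, 0)⟫ = ⟪DF (F, 0), v⟫ := by rw [real_inner_comm]; exact e2
    have c2 : ⟪G, DG (v, 0)⟫ = ⟪DF (0, G), v⟫ := by rw [real_inner_comm]; exact e3
    linear_combination (-b) * (c1 + e2) + (-c) * (c2 + e3)
  have hgrad : HasGradientAt (fun φ : ES m =>
      a * E (φ, z.2) + b * ‖gradPhi E (φ, z.2)‖ ^ 2 + c * ‖gradTheta E (φ, z.2)‖ ^ 2) X z.1 := by
    rw [hasGradientAt_iff_hasFDerivAt, hXD]
    exact htot
  exact hgrad.gradient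

lemma gradTheta_master (a b c : ℝ) (z : Hsp) :
    gradTheta (fun w => a * E w + b * ‖gradPhi E w‖ ^ 2 + c * ‖gradTheta E w‖ ^ 2) z =
      a • gradTheta E z
        + (2 * b) • fderiv ℝ (fun w => gradTheta E w) z (gradPhi E z, 0)
        + (2 * c) • fderiv ℝ (fun w => gradTheta E w) z (0, gradTheta E z) := by
  have hEd' := hEd E hE
  set DF := fderiv ℝ (fun w => gradPhi E w) z with hDF
  set DG := fderiv ℝ (fun w => gradTheta E w) z with hDG
  set F := gradPhi E z with hF
  set G := gradTheta E z with hG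
  set X := a • G + (2 * b) • DG (F, 0) + (2 * c) • DG (0, G) with hX
  have hι : HasFDerivAt (fun θ : ES n => ((z.1 : ES m), θ)) (inr ℝ (ES m) (ES n)) z.2 :=
    hasFDerivAt_prodMk_right z.1 z.2
  have hFat : HasFDerivAt (fun w => gradPhi E w) DF z :=
    (((gradPhi_contDiff E hE).differentiable one_ne_zero) z).hasFDerivAt
  have hGat : HasFDerivAt (fun w => gradTheta E w) DG z :=
    (((gradTheta_contDiff E hE).differentiable one_ne_zero) z).hasFDerivAt
  have hFι : HasFDerivAt (fun θ : ES n => gradPhi E (z.1, θ))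
      (DF.comp (inr ℝ (ES m) (ES n))) z.2 := by
    have := hFat.comp z.2 hι; exact this
  have hGι : HasFDerivAt (fun θ : ES n => gradTheta E (z.1, θ))
      (DG.comp (inr ℝ (ES m) (ES n))) z.2 := by
    have := hGat.comp z.2 hι; exact this
  have h1 : HasFDerivAt (fun θ : ES n => E (z.1, θ))
      ((fderiv ℝ E z).comp (inr ℝ (ES m) (ES n))) z.2 := fderiv_partial_theta E hEd' z
  have hin1 : HasFDerivAt (fun θ : ES n => ⟪gradPhi E (z.1, θ), gradPhi E (z.1, θ)⟫)
      ((fderivInnerCLM ℝ (F, F)).comp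
        ((DF.comp (inr ℝ (ES m) (ES n))).prod (DF.comp (inr ℝ (ES m) (ES n))))) z.2 :=
    hFι.inner ℝ hFι
  have hin2 : HasFDerivAt (fun θ : ES n => ⟪gradTheta E (z.1, θ), gradTheta E (z.1, θ)⟫)
      ((fderivInnerCLM ℝ (G, G)).comp
        ((DG.comp (inr ℝ (ES m) (ES n))).prod (DG.comp (inr ℝ (ES m) (ES n))))) z.2 :=
    hGι.inner ℝ hGι
  have hn1 : HasFDerivAt (fun θ : ES n => ‖gradPhi E (z.1, θ)‖ ^ 2)
      ((fderivInnerCLM ℝ (F, F)).comp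
        ((DF.comp (inr ℝ (ES m) (ES n))).prod (DF.comp (inr ℝ (ES m) (ES n))))) z.2 := by
    have heq : (fun θ : ES n => ‖gradPhi E (z.1, θ)‖ ^ 2)
        = fun θ : ES n => ⟪gradPhi E (z.1, θ), gradPhi E (z.1, θ)⟫ :=
      funext fun θ => (real_inner_self_eq_norm_sq _).symm
    rw [heq]; exact hin1
  have hn2 : HasFDerivAt (fun θ : ES n => ‖gradTheta E (z.1, θ)‖ ^ 2)
      ((fderivInnerCLM ℝ (G, G)).comp
        ((DG.comp (inr ℝ (ES m) (ES n))).prod (DG.comp (inr ℝ (ES m) (ES n))))) z.2 := by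
    have heq : (fun θ : ES n => ‖gradTheta E (z.1, θ)‖ ^ 2)
        = fun θ : ES n => ⟪gradTheta E (z.1, θ), gradTheta E (z.1, θ)⟫ :=
      funext fun θ => (real_inner_self_eq_norm_sq _).symm
    rw [heq]; exact hin2
  have htot := ((h1.const_mul a).add (hn1.const_mul b)).add (hn2.const_mul c)
  have hXD : toDual ℝ (ES n) X =
      a • ((fderiv ℝ E z).comp (inr ℝ (ES m) (ES n)))
        + b • ((fderivInnerCLM ℝ (F, F)).comp
            ((DF.comp (inr ℝ (ES m) (ES n))).prod (DF.comp (inr ℝ (ES m) (ES n)))))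
        + c • ((fderivInnerCLM ℝ (G, G)).comp
            ((DG.comp (inr ℝ (ES m) (ES n))).prod (DG.comp (inr ℝ (ES m) (ES n))))) := by
    apply ContinuousLinearMap.ext; intro v
    have e1 : ⟪G, v⟫ = fderiv ℝ E z (0, v) := inner_gradTheta E hEd' z v
    have e2 : ⟪DF (0, v), F⟫ = ⟪DG (F, 0), v⟫ := by
      rw [keyPhi E hE z (0, v) F, D2symm E hE z (0, v) ((F : ES m), (0 : ES n)),
        ← keyTheta E hE z (F, 0) v]
    have e3 : ⟪DG (0, v), G⟫ = ⟪DG (0, G), v⟫ := by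
      rw [keyTheta E hE z (0, v) G, D2symm E hE z (0, v) ((0 : ES m), (G : ES n)),
        ← keyTheta E hE z (0, G) v]
    simp only [toDual_apply_apply, ContinuousLinearMap.add_apply, ContinuousLinearMap.smul_apply,
      ContinuousLinearMap.comp_apply, ContinuousLinearMap.prod_apply, fderivInnerCLM_apply,
      inr_apply, smul_eq_mul, hX]
    rw [inner_add_left, inner_add_left, real_inner_smul_left, real_inner_smul_left,
      real_inner_smul_left, e1]
    have c1 : ⟪F, DF (0, v)⟫ = ⟪DG (F, 0), v⟫ := by rw [real_inner_comm]; exact e2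
    have c2 : ⟪G, DG (0, v)⟫ = ⟪DG (0, G), v⟫ := by rw [real_inner_comm]; exact e3
    linear_combination (-b) * (c1 + e2) + (-c) * (c2 + e3)
  have hgrad : HasGradientAt (fun θ : ES n =>
      a * E (z.1, θ) + b * ‖gradPhi E (z.1, θ)‖ ^ 2 + c * ‖gradTheta E (z.1, θ)‖ ^ 2) X z.2 := by
    rw [hasGradientAt_iff_hasFDerivAt, hXD]
    exact htot
  exact hgrad.gradient

end C2

end ZeroSumAux

/-- **Corollary 6.1 (zero-sum simultaneous gradient descent).**
In a zero-sum game (`f = ∇_φ E`, `g = −∇_θ E`), the first-order drift corrections of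
simultaneous gradient descent are gradients of modified losses, and consequently the
modified system of Theorem 3.1 is the gradient flow of
`L̃₁ = −E + (αh/4)‖∇_φ E‖² − (αh/4)‖∇_θ E‖²` and
`L̃₂ = E − (λh/4)‖∇_φ E‖² + (λh/4)‖∇_θ E‖²`. -/
theorem zero_sum_simultaneous_modified_losses {m n : ℕ}
    (E : EuclideanSpace ℝ (Fin m) × EuclideanSpace ℝ (Fin n) → ℝ)
    (hE : ContDiff ℝ 2 E)
    (α lam h : ℝ) (hα : 0 < α) (hlam : 0 < lam) (hh : 0 < h)
    (f : EuclideanSpace ℝ (Fin m) × EuclideanSpace ℝ (Fin n) → EuclideanSpace ℝ (Fin m))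
    (g : EuclideanSpace ℝ (Fin m) × EuclideanSpace ℝ (Fin n) → EuclideanSpace ℝ (Fin n))
    (hfdef : f = fun z => gradPhi E z) (hgdef : g = fun z => -gradTheta E z) :
    ∀ z : EuclideanSpace ℝ (Fin m) × EuclideanSpace ℝ (Fin n),
      -- drift correction of the first player is a gradient
      (-(1 / 2 : ℝ)) • (fderiv ℝ f z (f z, 0) + fderiv ℝ f z (0, g z)) =
        -gradPhi (fun w =>
          (1 / 4) * ‖gradPhi E w‖ ^ 2 - (1 / 4) * ‖gradTheta E w‖ ^ 2) z ∧
      -- drift correction of the second player is a gradient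
      (-(1 / 2 : ℝ)) • (fderiv ℝ g z (f z, 0) + fderiv ℝ g z (0, g z)) =
        -gradTheta (fun w =>
          -(1 / 4) * ‖gradPhi E w‖ ^ 2 + (1 / 4) * ‖gradTheta E w‖ ^ 2) z ∧
      -- the modified system is the gradient flow of the modified losses
      f z - (α * h / 2) • (fderiv ℝ f z (f z, 0) + fderiv ℝ f z (0, g z)) =
        -gradPhi (fun w =>
          -E w + (α * h / 4) * ‖gradPhi E w‖ ^ 2 - (α * h / 4) * ‖gradTheta E w‖ ^ 2) z ∧
      g z - (lam * h / 2) • (fderiv ℝ g z (f z, 0) + fderiv ℝ g z (0, g z)) =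
        -gradTheta (fun w =>
          E w - (lam * h / 4) * ‖gradPhi E w‖ ^ 2 + (lam * h / 4) * ‖gradTheta E w‖ ^ 2) z := by
  subst hfdef hgdef
  intro z
  have hGd : DifferentiableAt ℝ (fun w => gradTheta E w) z :=
    ((ZeroSumAux.gradTheta_contDiff E hE).differentiable one_ne_zero) z
  have hg' : fderiv ℝ (fun z => -gradTheta E z) z = -fderiv ℝ (fun w => gradTheta E w) z :=
    fderiv_neg
  set DF := fderiv ℝ (fun z => gradPhi E z) z with hDF
  set DG := fderiv ℝ (fun w => gradTheta E w) z with hDG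
  set F := gradPhi E z with hF
  set G := gradTheta E z with hG
  have hneg : ((0 : EuclideanSpace ℝ (Fin m)), -G) = -((0 : EuclideanSpace ℝ (Fin m)), G) := by
    simp
  refine ⟨?_, ?_, ?_, ?_⟩
  · have r : (fun w => (1 / 4 : ℝ) * ‖gradPhi E w‖ ^ 2 - (1 / 4) * ‖gradTheta E w‖ ^ 2)
        = (fun w => (0 : ℝ) * E w + (1 / 4) * ‖gradPhi E w‖ ^ 2
            + (-(1 / 4)) * ‖gradTheta E w‖ ^ 2) := by funext w; ring
    rw [r, ZeroSumAux.gradPhi_master E hE 0 (1 / 4) (-(1 / 4)) z]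
    rw [hneg, map_neg, ← hDF, ← hF, ← hG]
    module
  · have r : (fun w => -(1 / 4 : ℝ) * ‖gradPhi E w‖ ^ 2 + (1 / 4) * ‖gradTheta E w‖ ^ 2)
        = (fun w => (0 : ℝ) * E w + (-(1 / 4)) * ‖gradPhi E w‖ ^ 2
            + (1 / 4) * ‖gradTheta E w‖ ^ 2) := by funext w; ring
    rw [r, ZeroSumAux.gradTheta_master E hE 0 (-(1 / 4)) (1 / 4) z]
    rw [hg', hneg, ← hDG, ← hF, ← hG]
    simp only [ContinuousLinearMap.neg_apply, map_neg]
    module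
  · have r : (fun w => -E w + (α * h / 4) * ‖gradPhi E w‖ ^ 2
          - (α * h / 4) * ‖gradTheta E w‖ ^ 2)
        = (fun w => (-1 : ℝ) * E w + (α * h / 4) * ‖gradPhi E w‖ ^ 2
            + (-(α * h / 4)) * ‖gradTheta E w‖ ^ 2) := by funext w; ring
    rw [r, ZeroSumAux.gradPhi_master E hE (-1) (α * h / 4) (-(α * h / 4)) z]
    rw [hneg, map_neg, ← hDF, ← hF, ← hG]
    module
  · have r : (fun w => E w - (lam * h / 4) * ‖gradPhi E w‖ ^ 2
          + (lam * h / 4) * ‖gradTheta E w‖ ^ 2)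
        = (fun w => (1 : ℝ) * E w + (-(lam * h / 4)) * ‖gradPhi E w‖ ^ 2
            + (lam * h / 4) * ‖gradTheta E w‖ ^ 2) := by funext w; ring
    rw [r, ZeroSumAux.gradTheta_master E hE 1 (-(lam * h / 4)) (lam * h / 4) z]
    rw [hg', hneg, ← hDG, ← hF, ← hG]
    simp only [ContinuousLinearMap.neg_apply, map_neg]
    module
end
end

section
/- Let E : ℝ^m × ℝ^n → ℝ be twice continuously differentiable and set f = ∇_φ E, g = −∇_θ E (a zero-sum game). Then the first-order drift corrections of alternating gradient descent with m and k sub-steps per player are gradients of modified losses: −(1/2)((1/m)·f·∇_φ f + g·∇_θ f) = −∇_φ ( (1/(4m))‖∇_φ E‖² − (1/4)‖∇_θ E‖² ) and −(1/2)((1 − 2α/λ)·f·∇_φ g + (1/k)·g·∇_θ g) = −∇_θ ( −(1/4)(1 − 2α/λ)‖∇_φ E‖² + (1/(4k))‖∇_θ E‖² ). Consequently the modified system of Theorem 3.2 is the gradient flow dφ/ds = −∇_φ L̃₁, dθ/ds = −∇_θ L̃₂ with L̃₁ = −E + (αh/(4m))‖∇_φ E‖² − (αh/4)‖∇_θ E‖²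 and L̃₂ = E − (λh/4)(1 − 2α/λ)‖∇_φ E‖² + (λh/(4k))‖∇_θ E‖². -/
noncomputable section

open ContinuousLinearMap InnerProductSpace RealInnerProductSpace

namespace ZSAux

variable {m n : ℕ}

def iotaPhi (m n : ℕ) :
    ((EuclideanSpace ℝ (Fin m) × EuclideanSpace ℝ (Fin n)) →L[ℝ] ℝ) →L[ℝ]
      EuclideanSpace ℝ (Fin m) :=
  ((InnerProductSpace.toDual ℝ (EuclideanSpace ℝ (Fin m))).symm.toContinuousLinearEquiv.toContinuousLinearMap).comp
    ((ContinuousLinearMap.compL ℝ (EuclideanSpace ℝ (Fin m))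
        (EuclideanSpace ℝ (Fin m) × EuclideanSpace ℝ (Fin n)) ℝ).flip
      (ContinuousLinearMap.inl ℝ (EuclideanSpace ℝ (Fin m)) (EuclideanSpace ℝ (Fin n))))

def iotaTheta (m n : ℕ) :
    ((EuclideanSpace ℝ (Fin m) × EuclideanSpace ℝ (Fin n)) →L[ℝ] ℝ) →L[ℝ]
      EuclideanSpace ℝ (Fin n) :=
  ((InnerProductSpace.toDual ℝ (EuclideanSpace ℝ (Fin n))).symm.toContinuousLinearEquiv.toContinuousLinearMap).comp
    ((ContinuousLinearMap.compL ℝ (EuclideanSpace ℝ (Fin n))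
        (EuclideanSpace ℝ (Fin m) × EuclideanSpace ℝ (Fin n)) ℝ).flip
      (ContinuousLinearMap.inr ℝ (EuclideanSpace ℝ (Fin m)) (EuclideanSpace ℝ (Fin n))))

lemma iotaPhi_apply (B : (EuclideanSpace ℝ (Fin m) × EuclideanSpace ℝ (Fin n)) →L[ℝ] ℝ) :
    iotaPhi m n B = (InnerProductSpace.toDual ℝ (EuclideanSpace ℝ (Fin m))).symm
      (B.comp (ContinuousLinearMap.inl ℝ _ _)) := rfl

lemma iotaTheta_apply (B : (EuclideanSpace ℝ (Fin m) × EuclideanSpace ℝ (Fin n)) →L[ℝ] ℝ) :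
    iotaTheta m n B = (InnerProductSpace.toDual ℝ (EuclideanSpace ℝ (Fin n))).symm
      (B.comp (ContinuousLinearMap.inr ℝ _ _)) := rfl

lemma inner_iotaPhi (B : (EuclideanSpace ℝ (Fin m) × EuclideanSpace ℝ (Fin n)) →L[ℝ] ℝ)
    (v : EuclideanSpace ℝ (Fin m)) : ⟪iotaPhi m n B, v⟫_ℝ = B (v, 0) := by
  rw [iotaPhi_apply, InnerProductSpace.toDual_symm_apply]; rfl

lemma inner_iotaTheta (B : (EuclideanSpace ℝ (Fin m) × EuclideanSpace ℝ (Fin n)) →L[ℝ] ℝ)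
    (v : EuclideanSpace ℝ (Fin n)) : ⟪iotaTheta m n B, v⟫_ℝ = B (0, v) := by
  rw [iotaTheta_apply, InnerProductSpace.toDual_symm_apply]; rfl

lemma gradPhi_eq (E : EuclideanSpace ℝ (Fin m) × EuclideanSpace ℝ (Fin n) → ℝ)
    (z : EuclideanSpace ℝ (Fin m) × EuclideanSpace ℝ (Fin n)) (hE : DifferentiableAt ℝ E z) :
    gradPhi E z = iotaPhi m n (fderiv ℝ E z) := by
  have h : HasFDerivAt (fun φ => E (φ, z.2))
      ((fderiv ℝ E z).comp (ContinuousLinearMap.inl ℝ _ _)) z.1 :=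
    hE.hasFDerivAt.comp z.1 (hasFDerivAt_prodMk_left z.1 z.2)
  rw [gradPhi, gradient, h.fderiv, iotaPhi_apply]

lemma gradTheta_eq (E : EuclideanSpace ℝ (Fin m) × EuclideanSpace ℝ (Fin n) → ℝ)
    (z : EuclideanSpace ℝ (Fin m) × EuclideanSpace ℝ (Fin n)) (hE : DifferentiableAt ℝ E z) :
    gradTheta E z = iotaTheta m n (fderiv ℝ E z) := by
  have h : HasFDerivAt (fun θ => E (z.1, θ))
      ((fderiv ℝ E z).comp (ContinuousLinearMap.inr ℝ _ _)) z.2 :=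
    hE.hasFDerivAt.comp z.2 (hasFDerivAt_prodMk_right z.1 z.2)
  rw [gradTheta, gradient, h.fderiv, iotaTheta_apply]

lemma hasFDerivAt_gradPhi (E : EuclideanSpace ℝ (Fin m) × EuclideanSpace ℝ (Fin n) → ℝ)
    (hE : ContDiff ℝ 2 E) (z : EuclideanSpace ℝ (Fin m) × EuclideanSpace ℝ (Fin n)) :
    HasFDerivAt (fun w => gradPhi E w) ((iotaPhi m n).comp (fderiv ℝ (fderiv ℝ E) z)) z := by
  have h1 : ContDiff ℝ 1 (fderiv ℝ E) := hE.fderiv_right (by norm_num)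
  have h2 : HasFDerivAt (fderiv ℝ E) (fderiv ℝ (fderiv ℝ E) z) z :=
    (h1.differentiable one_ne_zero z).hasFDerivAt
  have h3 := (iotaPhi m n).hasFDerivAt.comp z h2
  have h4 : (fun w => gradPhi E w) = fun w => iotaPhi m n (fderiv ℝ E w) :=
    funext fun w => gradPhi_eq E w (hE.differentiable (by norm_num) w)
  rw [h4]; exact h3

lemma hasFDerivAt_gradTheta (E : EuclideanSpace ℝ (Fin m) × EuclideanSpace ℝ (Fin n) → ℝ)
    (hE : ContDiff ℝ 2 E) (z : EuclideanSpace ℝ (Fin m) × EuclideanSpace ℝ (Fin n)) :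
    HasFDerivAt (fun w => gradTheta E w) ((iotaTheta m n).comp (fderiv ℝ (fderiv ℝ E) z)) z := by
  have h1 : ContDiff ℝ 1 (fderiv ℝ E) := hE.fderiv_right (by norm_num)
  have h2 : HasFDerivAt (fderiv ℝ E) (fderiv ℝ (fderiv ℝ E) z) z :=
    (h1.differentiable one_ne_zero z).hasFDerivAt
  have h3 := (iotaTheta m n).hasFDerivAt.comp z h2
  have h4 : (fun w => gradTheta E w) = fun w => iotaTheta m n (fderiv ℝ E w) :=
    funext fun w => gradTheta_eq E w (hE.differentiable (by norm_num) w)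
  rw [h4]; exact h3

lemma hasFDerivAt_norm_sq {Z F : Type*} [NormedAddCommGroup Z] [NormedSpace ℝ Z]
    [NormedAddCommGroup F] [InnerProductSpace ℝ F] {V : Z → F} {DV : Z →L[ℝ] F} {z : Z}
    (hV : HasFDerivAt V DV z) :
    HasFDerivAt (fun w => ‖V w‖ ^ 2) ((2 : ℝ) • ((innerSL ℝ (V z)).comp DV)) z := by
  have h := HasFDerivAt.inner (𝕜 := ℝ) hV hV
  have heq : (fun w => ‖V w‖ ^ 2) = fun w => ⟪V w, V w⟫_ℝ :=
    funext fun w => (real_inner_self_eq_norm_sq _).symm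
  rw [heq]
  refine h.congr_fderiv ?_
  ext u
  simp [fderivInnerCLM_apply, real_inner_comm, ContinuousLinearMap.smul_apply]
  ring

end ZSAux

open ZSAux

set_option maxHeartbeats 1000000

/-- **Corollary 6.2 (zero-sum alternating gradient descent).**
In a zero-sum game (`f = ∇_φ E`, `g = −∇_θ E`), the first-order drift corrections of
alternating gradient descent with `m` and `k` sub-steps per player are gradients of modified
losses, and consequently the modified system of Theorem 3.2 is the gradient flow of
`L̃₁ = −E + (αh/(4m))‖∇_φ E‖² − (αh/4)‖∇_θ E‖²` and
`L̃₂ = E − (λh/4)(1 − 2α/λ)‖∇_φ E‖² + (λh/(4k))‖∇_θ E‖²`. -/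
theorem zero_sum_alternating_modified_losses {m n : ℕ}
    (E : EuclideanSpace ℝ (Fin m) × EuclideanSpace ℝ (Fin n) → ℝ)
    (hE : ContDiff ℝ 2 E)
    (α lam h : ℝ) (hα : 0 < α) (hlam : 0 < lam) (hh : 0 < h)
    (msub ksub : ℕ) (hmsub : 0 < msub) (hksub : 0 < ksub)
    (f : EuclideanSpace ℝ (Fin m) × EuclideanSpace ℝ (Fin n) → EuclideanSpace ℝ (Fin m))
    (g : EuclideanSpace ℝ (Fin m) × EuclideanSpace ℝ (Fin n) → EuclideanSpace ℝ (Fin n))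
    (hfdef : f = fun z => gradPhi E z) (hgdef : g = fun z => -gradTheta E z) :
    ∀ z : EuclideanSpace ℝ (Fin m) × EuclideanSpace ℝ (Fin n),
      -- drift correction of the first player is a gradient
      (-(1 / 2 : ℝ)) •
          ((1 / (msub : ℝ)) • fderiv ℝ f z (f z, 0) + fderiv ℝ f z (0, g z)) =
        -gradPhi (fun w =>
          (1 / (4 * (msub : ℝ))) * ‖gradPhi E w‖ ^ 2 - (1 / 4) * ‖gradTheta E w‖ ^ 2) z ∧
      -- drift correction of the second player is a gradient
      (-(1 / 2 : ℝ)) •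
          ((1 - 2 * α / lam) • fderiv ℝ g z (f z, 0) +
            (1 / (ksub : ℝ)) • fderiv ℝ g z (0, g z)) =
        -gradTheta (fun w =>
          -(1 / 4) * (1 - 2 * α / lam) * ‖gradPhi E w‖ ^ 2 +
            (1 / (4 * (ksub : ℝ))) * ‖gradTheta E w‖ ^ 2) z ∧
      -- the modified system is the gradient flow of the modified losses
      f z - (α * h / 2) •
          ((1 / (msub : ℝ)) • fderiv ℝ f z (f z, 0) + fderiv ℝ f z (0, g z)) =
        -gradPhi (fun w =>
          -E w + (α * h / (4 * (msub : ℝ))) * ‖gradPhi E w‖ ^ 2 -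
            (α * h / 4) * ‖gradTheta E w‖ ^ 2) z ∧
      g z - (lam * h / 2) •
          ((1 - 2 * α / lam) • fderiv ℝ g z (f z, 0) +
            (1 / (ksub : ℝ)) • fderiv ℝ g z (0, g z)) =
        -gradTheta (fun w =>
          E w - (lam * h / 4) * (1 - 2 * α / lam) * ‖gradPhi E w‖ ^ 2 +
            (lam * h / (4 * (ksub : ℝ))) * ‖gradTheta E w‖ ^ 2) z := by
  subst hfdef hgdef
  intro z
  have hEdiff : Differentiable ℝ E := hE.differentiable (by norm_num)
  have hE1 : ContDiff ℝ 1 (fderiv ℝ E) := hE.fderiv_right (by norm_num)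
  have hsymm : ∀ u w, fderiv ℝ (fderiv ℝ E) z u w = fderiv ℝ (fderiv ℝ E) z w u :=
    second_derivative_symmetric (fun y => (hEdiff y).hasFDerivAt)
      ((hE1.differentiable one_ne_zero z).hasFDerivAt)
  have hP := hasFDerivAt_gradPhi E hE z
  have hQ := hasFDerivAt_gradTheta E hE z
  have hP2 := hasFDerivAt_norm_sq hP
  have hQ2 := hasFDerivAt_norm_sq hQ
  have hdf := hP.fderiv
  have hdg : fderiv ℝ (fun w => -gradTheta E w) z =
      -((iotaTheta m n).comp (fderiv ℝ (fderiv ℝ E) z)) := hQ.neg.fderiv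
  have hPrep : gradPhi E z = iotaPhi m n (fderiv ℝ E z) := gradPhi_eq E z (hEdiff z)
  have hQrep : gradTheta E z = iotaTheta m n (fderiv ℝ E z) := gradTheta_eq E z (hEdiff z)
  beta_reduce
  set H := fderiv ℝ (fderiv ℝ E) z with hHdef
  set P := gradPhi E z with hPdef
  set Q := gradTheta E z with hQdef
  have hPv : ∀ v, ⟪P, v⟫_ℝ = fderiv ℝ E z (v, 0) := fun v => by
    rw [hPrep]; exact inner_iotaPhi _ v
  have hQv : ∀ v, ⟪Q, v⟫_ℝ = fderiv ℝ E z (0, v) := fun v => by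
    rw [hQrep]; exact inner_iotaTheta _ v
  have aP : ∀ B, ⟪P, iotaPhi m n B⟫_ℝ = B (P, 0) := fun B =>
    (real_inner_comm _ _).trans (inner_iotaPhi B P)
  have aQ : ∀ B, ⟪Q, iotaTheta m n B⟫_ℝ = B (0, Q) := fun B =>
    (real_inner_comm _ _).trans (inner_iotaTheta B Q)
  have hnQ : ((0 : EuclideanSpace ℝ (Fin m)), -Q) =
      -(((0 : EuclideanSpace ℝ (Fin m)), Q)) := by simp
  refine ⟨?_, ?_, ?_, ?_⟩
  · -- claim 1
    have hF1 : HasFDerivAt (fun w =>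
        (1 / (4 * (msub : ℝ))) * ‖gradPhi E w‖ ^ 2 - (1 / 4) * ‖gradTheta E w‖ ^ 2)
        ((1 / (4 * (msub : ℝ))) • ((2 : ℝ) • ((innerSL ℝ P).comp ((iotaPhi m n).comp H))) -
          ((1:ℝ) / 4) • ((2 : ℝ) • ((innerSL ℝ Q).comp ((iotaTheta m n).comp H)))) z :=
      (hP2.const_mul _).sub (hQ2.const_mul _)
    rw [hdf, gradPhi_eq _ z hF1.differentiableAt, hF1.fderiv]
    refine ext_inner_right ℝ fun v => ?_
    rw [hnQ]
    simp only [map_neg, ContinuousLinearMap.comp_apply, inner_add_left, inner_sub_left,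
      inner_neg_left, real_inner_smul_left, inner_iotaPhi, ContinuousLinearMap.sub_apply,
      ContinuousLinearMap.smul_apply, ContinuousLinearMap.neg_apply, innerSL_apply_apply,
      smul_eq_mul, aP, aQ]
    rw [hsymm (v, 0) (P, 0), hsymm (v, 0) (0, Q)]
    ring
  · -- claim 2
    have hF2 : HasFDerivAt (fun w =>
        -(1 / 4) * (1 - 2 * α / lam) * ‖gradPhi E w‖ ^ 2 +
          (1 / (4 * (ksub : ℝ))) * ‖gradTheta E w‖ ^ 2)
        ((-(1 / 4) * (1 - 2 * α / lam)) • ((2 : ℝ) • ((innerSL ℝ P).comp ((iotaPhi m n).comp H))) +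
          (1 / (4 * (ksub : ℝ))) • ((2 : ℝ) • ((innerSL ℝ Q).comp ((iotaTheta m n).comp H)))) z :=
      (hP2.const_mul _).add (hQ2.const_mul _)
    rw [hdg, gradTheta_eq _ z hF2.differentiableAt, hF2.fderiv]
    refine ext_inner_right ℝ fun v => ?_
    rw [hnQ]
    simp only [map_neg, ContinuousLinearMap.comp_apply, inner_add_left, inner_sub_left,
      inner_neg_left, real_inner_smul_left, inner_iotaTheta, ContinuousLinearMap.add_apply,
      ContinuousLinearMap.smul_apply, ContinuousLinearMap.neg_apply, innerSL_apply_apply,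
      smul_eq_mul, aP, aQ]
    rw [hsymm (0, v) (P, 0), hsymm (0, v) (0, Q)]
    ring
  · -- claim 3
    have hF3 : HasFDerivAt (fun w =>
        -E w + (α * h / (4 * (msub : ℝ))) * ‖gradPhi E w‖ ^ 2 -
          (α * h / 4) * ‖gradTheta E w‖ ^ 2)
        ((-(fderiv ℝ E z) +
            (α * h / (4 * (msub : ℝ))) • ((2 : ℝ) • ((innerSL ℝ P).comp ((iotaPhi m n).comp H)))) -
          (α * h / 4) • ((2 : ℝ) • ((innerSL ℝ Q).comp ((iotaTheta m n).comp H)))) z :=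
      (((hEdiff z).hasFDerivAt.neg.add (hP2.const_mul _)).sub (hQ2.const_mul _))
    rw [hdf, gradPhi_eq _ z hF3.differentiableAt, hF3.fderiv]
    refine ext_inner_right ℝ fun v => ?_
    rw [hnQ]
    simp only [map_neg, ContinuousLinearMap.comp_apply, inner_add_left, inner_sub_left,
      inner_neg_left, real_inner_smul_left, inner_iotaPhi, ContinuousLinearMap.sub_apply,
      ContinuousLinearMap.add_apply, ContinuousLinearMap.smul_apply,
      ContinuousLinearMap.neg_apply, innerSL_apply_apply, smul_eq_mul, aP, aQ]
    rw [hPv v, hsymm (v, 0) (P, 0), hsymm (v, 0) (0, Q)]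
    ring
  · -- claim 4
    have hF4 : HasFDerivAt (fun w =>
        E w - (lam * h / 4) * (1 - 2 * α / lam) * ‖gradPhi E w‖ ^ 2 +
          (lam * h / (4 * (ksub : ℝ))) * ‖gradTheta E w‖ ^ 2)
        (((fderiv ℝ E z) -
            (lam * h / 4 * (1 - 2 * α / lam)) •
              ((2 : ℝ) • ((innerSL ℝ P).comp ((iotaPhi m n).comp H)))) +
          (lam * h / (4 * (ksub : ℝ))) •
            ((2 : ℝ) • ((innerSL ℝ Q).comp ((iotaTheta m n).comp H)))) z :=
      (((hEdiff z).hasFDerivAt.sub (hP2.const_mul _)).add (hQ2.const_mul _))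
    rw [hdg, gradTheta_eq _ z hF4.differentiableAt, hF4.fderiv]
    refine ext_inner_right ℝ fun v => ?_
    rw [hnQ]
    simp only [map_neg, ContinuousLinearMap.comp_apply, inner_add_left, inner_sub_left,
      inner_neg_left, real_inner_smul_left, inner_iotaTheta, ContinuousLinearMap.sub_apply,
      ContinuousLinearMap.add_apply, ContinuousLinearMap.smul_apply,
      ContinuousLinearMap.neg_apply, innerSL_apply_apply, smul_eq_mul, aP, aQ]
    rw [hQv v, hsymm (0, v) (P, 0), hsymm (0, v) (0, Q)]
    ring
end
end

section
/- Let f, f₁ : ℝ^m × ℝ^n → ℝ^m and g, g₁ : ℝ^m × ℝ^n → ℝ^n be twice continuously differentiable with bounded derivatives, let c > 0, and for τ > 0 let (φ(s), θ(s)) solve dφ/ds = f + τ·f₁, dθ/ds = g + cτ·g₁ with initial condition (φ₀, θ₀). Then as τ → 0⁺, φ(τ) = φ₀ + τ·f(φ₀, θ₀) + τ²·( f₁(φ₀, θ₀) + (1/2) f(φ₀, θ₀)·∇_φ f(φ₀, θ₀) + (1/2) g(φ₀, θ₀)·∇_θ f(φ₀, θ₀) ) + O(τ³), i.e. there exist C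 > 0 and τ₀ > 0 such that the difference between the two sides is at most C τ³ in norm for all 0 < τ < τ₀. -/
noncomputable section

lemma myNormFderivEq {E F : Type*} [NormedAddCommGroup E] [NormedSpace ℝ E]
    [NormedAddCommGroup F] [NormedSpace ℝ F] (u : E → F) (z : E) :
    ‖fderiv ℝ u z‖ = ‖iteratedFDeriv ℝ 1 u z‖ := by
  calc ‖fderiv ℝ u z‖ = ‖iteratedFDeriv ℝ 0 (fderiv ℝ u) z‖ := norm_iteratedFDeriv_zero.symm
    _ = ‖iteratedFDeriv ℝ 1 u z‖ := norm_iteratedFDeriv_fderiv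

lemma myBoundsPack {E F : Type*} [NormedAddCommGroup E] [NormedSpace ℝ E]
    [NormedAddCommGroup F] [NormedSpace ℝ F] {h : E → F}
    (hh : ContDiff ℝ 2 h)
    (hb : ∀ i : ℕ, i ≤ 2 → ∃ C : ℝ, ∀ z, ‖iteratedFDeriv ℝ i h z‖ ≤ C) :
    ∃ B : ℝ, 1 ≤ B ∧ (∀ z, ‖h z‖ ≤ B) ∧ (∀ z, ‖fderiv ℝ h z‖ ≤ B) ∧
      (∀ x y, ‖h x - h y‖ ≤ B * ‖x - y‖) ∧
      (∀ x y, ‖fderiv ℝ h x - fderiv ℝ h y‖ ≤ B * ‖x - y‖) := by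
  obtain ⟨C0, hC0⟩ := hb 0 (by norm_num)
  obtain ⟨C1, hC1⟩ := hb 1 (by norm_num)
  obtain ⟨C2, hC2⟩ := hb 2 le_rfl
  refine ⟨max 1 (max C0 (max C1 C2)), le_max_left _ _, ?_, ?_, ?_, ?_⟩
  · intro z
    calc ‖h z‖ = ‖iteratedFDeriv ℝ 0 h z‖ := norm_iteratedFDeriv_zero.symm
      _ ≤ C0 := hC0 z
      _ ≤ _ := le_max_of_le_right (le_max_left _ _)
  · intro z
    rw [myNormFderivEq]
    exact (hC1 z).trans (le_max_of_le_right (le_max_of_le_right (le_max_left _ _)))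
  · intro x y
    have hd : ∀ w ∈ (Set.univ : Set E), DifferentiableAt ℝ h w :=
      fun w _ => (hh.differentiable (by norm_num)).differentiableAt
    have := Convex.norm_image_sub_le_of_norm_fderiv_le (C := max 1 (max C0 (max C1 C2))) hd
      (fun w _ => by
        rw [myNormFderivEq]
        exact (hC1 w).trans (le_max_of_le_right (le_max_of_le_right (le_max_left _ _))))
      convex_univ (Set.mem_univ y) (Set.mem_univ x)
    simpa using this
  · intro x y
    have hdc : ContDiff ℝ 1 (fderiv ℝ h) := hh.fderiv_right (by norm_num)
    have hd : ∀ w ∈ (Set.univ : Set E), DifferentiableAt ℝ (fderiv ℝ h) w :=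
      fun w _ => (hdc.differentiable (by norm_num)).differentiableAt
    have := Convex.norm_image_sub_le_of_norm_fderiv_le (C := max 1 (max C0 (max C1 C2))) hd
      (fun w _ => by
        rw [myNormFderivEq]
        calc ‖iteratedFDeriv ℝ 1 (fderiv ℝ h) w‖ = ‖iteratedFDeriv ℝ 2 h w‖ :=
              norm_iteratedFDeriv_fderiv
          _ ≤ C2 := hC2 w
          _ ≤ _ := le_max_of_le_right (le_max_of_le_right (le_max_right _ _)))
      convex_univ (Set.mem_univ y) (Set.mem_univ x)
    simpa using this

set_option maxHeartbeats 1000000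

/-- **Lemma (Taylor expansion of the modified-flow solution).**
If `(φ(s), θ(s))` solves `dφ/ds = f + τ·f₁`, `dθ/ds = g + cτ·g₁` with initial condition
`(φ₀, θ₀)`, then as `τ → 0⁺`,
`φ(τ) = φ₀ + τ f + τ²(f₁ + (1/2) f·∇_φ f + (1/2) g·∇_θ f) + O(τ³)`,
where `f`, `g`, `f₁` and the derivatives are evaluated at `(φ₀, θ₀)`. -/
theorem modified_flow_taylor_expansion {m n : ℕ}
    (f f₁ : EuclideanSpace ℝ (Fin m) × EuclideanSpace ℝ (Fin n) → EuclideanSpace ℝ (Fin m))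
    (g g₁ : EuclideanSpace ℝ (Fin m) × EuclideanSpace ℝ (Fin n) → EuclideanSpace ℝ (Fin n))
    (hf : ContDiff ℝ 2 f) (hg : ContDiff ℝ 2 g)
    (hf₁ : ContDiff ℝ 2 f₁) (hg₁ : ContDiff ℝ 2 g₁)
    (hfb : ∀ i : ℕ, i ≤ 2 → ∃ C : ℝ, ∀ z, ‖iteratedFDeriv ℝ i f z‖ ≤ C)
    (hgb : ∀ i : ℕ, i ≤ 2 → ∃ C : ℝ, ∀ z, ‖iteratedFDeriv ℝ i g z‖ ≤ C)
    (hf₁b : ∀ i : ℕ, i ≤ 2 → ∃ C : ℝ, ∀ z, ‖iteratedFDeriv ℝ i f₁ z‖ ≤ C)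
    (hg₁b : ∀ i : ℕ, i ≤ 2 → ∃ C : ℝ, ∀ z, ‖iteratedFDeriv ℝ i g₁ z‖ ≤ C)
    (c : ℝ) (hc : 0 < c)
    (φ0 : EuclideanSpace ℝ (Fin m)) (θ0 : EuclideanSpace ℝ (Fin n))
    -- the solution `s ↦ (φs τ s, θs τ s)` of the modified system, for parameter `τ`
    (φs : ℝ → ℝ → EuclideanSpace ℝ (Fin m))
    (θs : ℝ → ℝ → EuclideanSpace ℝ (Fin n))
    (hinitφ : ∀ τ : ℝ, 0 < τ → φs τ 0 = φ0)
    (hinitθ : ∀ τ : ℝ, 0 < τ → θs τ 0 = θ0)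
    (hodeφ : ∀ τ : ℝ, 0 < τ → ∀ s : ℝ,
      HasDerivAt (φs τ) (f (φs τ s, θs τ s) + τ • f₁ (φs τ s, θs τ s)) s)
    (hodeθ : ∀ τ : ℝ, 0 < τ → ∀ s : ℝ,
      HasDerivAt (θs τ) (g (φs τ s, θs τ s) + (c * τ) • g₁ (φs τ s, θs τ s)) s) :
    ∃ C > (0 : ℝ), ∃ τ0 > (0 : ℝ), ∀ τ : ℝ, 0 < τ → τ < τ0 →
      ‖φs τ τ -
          (φ0 + τ • f (φ0, θ0) +
            (τ ^ 2) •
              (f₁ (φ0, θ0) + (1 / 2 : ℝ) • fderiv ℝ f (φ0, θ0) (f (φ0, θ0), 0) +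
                (1 / 2 : ℝ) • fderiv ℝ f (φ0, θ0) (0, g (φ0, θ0))))‖ ≤ C * τ ^ 3 := by
  classical
  obtain ⟨Bf, hBf1, hBf0, hBfD, hBfL, hBfDL⟩ := myBoundsPack hf hfb
  obtain ⟨Bg, hBg1, hBg0, hBgD, hBgL, hBgDL⟩ := myBoundsPack hg hgb
  obtain ⟨B1, hB11, hB10, hB1D, hB1L, hB1DL⟩ := myBoundsPack hf₁ hf₁b
  obtain ⟨B2, hB21, hB20, hB2D, hB2L, hB2DL⟩ := myBoundsPack hg₁ hg₁b
  set B : ℝ := max (max Bf Bg) (max B1 B2) with hBdef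
  have hBfle : Bf ≤ B := le_trans (le_max_left _ _) (le_max_left _ _)
  have hBgle : Bg ≤ B := le_trans (le_max_right _ _) (le_max_left _ _)
  have hB1le : B1 ≤ B := le_trans (le_max_left _ _) (le_max_right _ _)
  have hB2le : B2 ≤ B := le_trans (le_max_right _ _) (le_max_right _ _)
  have hB1' : (1 : ℝ) ≤ B := hBf1.trans hBfle
  have hB0 : (0 : ℝ) < B := lt_of_lt_of_le one_pos hB1'
  -- unified bounds
  have hfB : ∀ z, ‖f z‖ ≤ B := fun z => (hBf0 z).trans hBfle
  have hgB : ∀ z, ‖g z‖ ≤ B := fun z => (hBg0 z).trans hBgle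
  have hf1B : ∀ z, ‖f₁ z‖ ≤ B := fun z => (hB10 z).trans hB1le
  have hg1B : ∀ z, ‖g₁ z‖ ≤ B := fun z => (hB20 z).trans hB2le
  have hDfB : ∀ z, ‖fderiv ℝ f z‖ ≤ B := fun z => (hBfD z).trans hBfle
  have hDf1B : ∀ z, ‖fderiv ℝ f₁ z‖ ≤ B := fun z => (hB1D z).trans hB1le
  have hfLip : ∀ x y, ‖f x - f y‖ ≤ B * ‖x - y‖ := fun x y =>
    (hBfL x y).trans (mul_le_mul_of_nonneg_right hBfle (norm_nonneg _))
  have hgLip : ∀ x y, ‖g x - g y‖ ≤ B * ‖x - y‖ := fun x y =>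
    (hBgL x y).trans (mul_le_mul_of_nonneg_right hBgle (norm_nonneg _))
  have hf1Lip : ∀ x y, ‖f₁ x - f₁ y‖ ≤ B * ‖x - y‖ := fun x y =>
    (hB1L x y).trans (mul_le_mul_of_nonneg_right hB1le (norm_nonneg _))
  have hg1Lip : ∀ x y, ‖g₁ x - g₁ y‖ ≤ B * ‖x - y‖ := fun x y =>
    (hB2L x y).trans (mul_le_mul_of_nonneg_right hB2le (norm_nonneg _))
  have hDfLip : ∀ x y, ‖fderiv ℝ f x - fderiv ℝ f y‖ ≤ B * ‖x - y‖ := fun x y =>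
    (hBfDL x y).trans (mul_le_mul_of_nonneg_right hBfle (norm_nonneg _))
  have hDf1Lip : ∀ x y, ‖fderiv ℝ f₁ x - fderiv ℝ f₁ y‖ ≤ B * ‖x - y‖ := fun x y =>
    (hB1DL x y).trans (mul_le_mul_of_nonneg_right hB1le (norm_nonneg _))
  refine ⟨16 * B ^ 3 + (3 + c) * B ^ 2, by positivity, min 1 c⁻¹, by positivity, ?_⟩
  intro τ hτ hτlt
  have hτ0 : (0 : ℝ) ≤ τ := le_of_lt hτ
  have hτ1 : τ ≤ 1 := le_of_lt (lt_of_lt_of_le hτlt (min_le_left _ _))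
  have hcτ1 : c * τ ≤ 1 := by
    have h1 : τ < c⁻¹ := lt_of_lt_of_le hτlt (min_le_right _ _)
    have := mul_lt_mul_of_pos_left h1 hc
    rw [mul_inv_cancel₀ (ne_of_gt hc)] at this
    exact le_of_lt this
  have hcτ0 : (0 : ℝ) ≤ c * τ := by positivity
  set z : ℝ → EuclideanSpace ℝ (Fin m) × EuclideanSpace ℝ (Fin n) :=
    fun s => (φs τ s, θs τ s) with hzdef
  set p : ℝ → EuclideanSpace ℝ (Fin m) := fun s => f (z s) + τ • f₁ (z s) with hpdef
  set q : ℝ → EuclideanSpace ℝ (Fin n) := fun s => g (z s) + (c * τ) • g₁ (z s) with hqdef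
  set v : ℝ → EuclideanSpace ℝ (Fin m) × EuclideanSpace ℝ (Fin n) :=
    fun s => (p s, q s) with hvdef
  have hz0 : z 0 = (φ0, θ0) := by
    simp only [hzdef, hinitφ τ hτ, hinitθ τ hτ]
  have hzd : ∀ s, HasDerivAt z (v s) s := fun s => (hodeφ τ hτ s).prodMk (hodeθ τ hτ s)
  -- bound on the velocity
  have hpb : ∀ s, ‖p s‖ ≤ 2 * B := by
    intro s
    calc ‖p s‖ ≤ ‖f (z s)‖ + ‖τ • f₁ (z s)‖ := norm_add_le _ _
      _ ≤ B + B := by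
          refine add_le_add (hfB _) ?_
          rw [norm_smul, Real.norm_eq_abs, abs_of_pos hτ]
          calc τ * ‖f₁ (z s)‖ ≤ 1 * B :=
                mul_le_mul hτ1 (hf1B _) (norm_nonneg _) zero_le_one
            _ = B := one_mul B
      _ = 2 * B := by ring
  have hqb : ∀ s, ‖q s‖ ≤ 2 * B := by
    intro s
    calc ‖q s‖ ≤ ‖g (z s)‖ + ‖(c * τ) • g₁ (z s)‖ := norm_add_le _ _
      _ ≤ B + B := by
          refine add_le_add (hgB _) ?_
          rw [norm_smul, Real.norm_eq_abs, abs_of_nonneg hcτ0]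
          calc (c * τ) * ‖g₁ (z s)‖ ≤ 1 * B :=
                mul_le_mul hcτ1 (hg1B _) (norm_nonneg _) zero_le_one
            _ = B := one_mul B
      _ = 2 * B := by ring
  have hvb : ∀ s, ‖v s‖ ≤ 2 * B := by
    intro s
    rw [hvdef]
    exact max_le (hpb s) (hqb s)
  -- Lipschitz bound on the trajectory
  have hzlip : ∀ s ∈ Set.Icc (0 : ℝ) τ, ‖z s - z 0‖ ≤ 2 * B * s := by
    intro s hs
    have := norm_image_sub_le_of_norm_deriv_le_segment' (a := 0) (b := τ) (f := z) (f' := v)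
      (fun x _ => (hzd x).hasDerivWithinAt) (fun x _ => hvb x) s hs
    simpa using this
  -- Lipschitz bound on the velocity
  have hvlip : ∀ s ∈ Set.Icc (0 : ℝ) τ, ‖v s - v 0‖ ≤ 4 * B ^ 2 * s := by
    intro s hs
    have hzl := hzlip s hs
    have hs0 : 0 ≤ s := hs.1
    have h1 : ‖p s - p 0‖ ≤ 4 * B ^ 2 * s := by
      have he : p s - p 0 = (f (z s) - f (z 0)) + τ • (f₁ (z s) - f₁ (z 0)) := by
        simp only [hpdef, smul_sub]; abel
      rw [he]
      have e1 := hfLip (z s) (z 0)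
      have e2 := hf1Lip (z s) (z 0)
      calc ‖(f (z s) - f (z 0)) + τ • (f₁ (z s) - f₁ (z 0))‖
          ≤ ‖f (z s) - f (z 0)‖ + τ * ‖f₁ (z s) - f₁ (z 0)‖ := by
            refine (norm_add_le _ _).trans ?_
            rw [norm_smul, Real.norm_eq_abs, abs_of_pos hτ]
        _ ≤ B * (2 * B * s) + 1 * (B * (2 * B * s)) := by
            refine add_le_add (e1.trans (mul_le_mul_of_nonneg_left hzl hB0.le)) ?_
            exact mul_le_mul hτ1 (e2.trans (mul_le_mul_of_nonneg_left hzl hB0.le))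
              (norm_nonneg _) zero_le_one
        _ = 4 * B ^ 2 * s := by ring
    have h2 : ‖q s - q 0‖ ≤ 4 * B ^ 2 * s := by
      have he : q s - q 0 = (g (z s) - g (z 0)) + (c * τ) • (g₁ (z s) - g₁ (z 0)) := by
        simp only [hqdef, smul_sub]; abel
      rw [he]
      have e1 := hgLip (z s) (z 0)
      have e2 := hg1Lip (z s) (z 0)
      calc ‖(g (z s) - g (z 0)) + (c * τ) • (g₁ (z s) - g₁ (z 0))‖
          ≤ ‖g (z s) - g (z 0)‖ + (c * τ) * ‖g₁ (z s) - g₁ (z 0)‖ := by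
            refine (norm_add_le _ _).trans ?_
            rw [norm_smul, Real.norm_eq_abs, abs_of_nonneg hcτ0]
        _ ≤ B * (2 * B * s) + 1 * (B * (2 * B * s)) := by
            refine add_le_add (e1.trans (mul_le_mul_of_nonneg_left hzl hB0.le)) ?_
            exact mul_le_mul hcτ1 (e2.trans (mul_le_mul_of_nonneg_left hzl hB0.le))
              (norm_nonneg _) zero_le_one
        _ = 4 * B ^ 2 * s := by ring
    have : v s - v 0 = (p s - p 0, q s - q 0) := rfl
    rw [this, Prod.norm_def]
    exact max_le h1 h2
  -- the second derivative of φ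
  set a : ℝ → EuclideanSpace ℝ (Fin m) :=
    fun s => fderiv ℝ f (z s) (v s) + τ • fderiv ℝ f₁ (z s) (v s) with hadef
  have hpd : ∀ s, HasDerivAt p (a s) s := by
    intro s
    have h1 : HasDerivAt (fun s => f (z s)) (fderiv ℝ f (z s) (v s)) s :=
      ((hf.differentiable (by norm_num) (z s)).hasFDerivAt).comp_hasDerivAt s (hzd s)
    have h2 : HasDerivAt (fun s => f₁ (z s)) (fderiv ℝ f₁ (z s) (v s)) s :=
      ((hf₁.differentiable (by norm_num) (z s)).hasFDerivAt).comp_hasDerivAt s (hzd s)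
    exact h1.add (h2.const_smul τ)
  -- Lipschitz bound on the second derivative
  have halip : ∀ s ∈ Set.Icc (0 : ℝ) τ, ‖a s - a 0‖ ≤ 16 * B ^ 3 * τ := by
    intro s hs
    have hs0 : 0 ≤ s := hs.1
    have hsτ : s ≤ τ := hs.2
    have key : ∀ (h : EuclideanSpace ℝ (Fin m) × EuclideanSpace ℝ (Fin n) →
        EuclideanSpace ℝ (Fin m)),
        (∀ w, ‖fderiv ℝ h w‖ ≤ B) →
        (∀ x y, ‖fderiv ℝ h x - fderiv ℝ h y‖ ≤ B * ‖x - y‖) →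
        ‖fderiv ℝ h (z s) (v s) - fderiv ℝ h (z 0) (v 0)‖ ≤ 8 * B ^ 3 * s := by
      intro h hb hlip
      have heq : fderiv ℝ h (z s) (v s) - fderiv ℝ h (z 0) (v 0)
          = (fderiv ℝ h (z s) - fderiv ℝ h (z 0)) (v s) + (fderiv ℝ h (z 0)) (v s - v 0) := by
        simp only [ContinuousLinearMap.sub_apply, map_sub]; abel
      rw [heq]
      have e1 : ‖(fderiv ℝ h (z s) - fderiv ℝ h (z 0)) (v s)‖
          ≤ ‖fderiv ℝ h (z s) - fderiv ℝ h (z 0)‖ * ‖v s‖ := ContinuousLinearMap.le_opNorm _ _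
      have e2 : ‖(fderiv ℝ h (z 0)) (v s - v 0)‖
          ≤ ‖fderiv ℝ h (z 0)‖ * ‖v s - v 0‖ := ContinuousLinearMap.le_opNorm _ _
      have e3 : ‖fderiv ℝ h (z s) - fderiv ℝ h (z 0)‖ ≤ B * (2 * B * s) :=
        (hlip _ _).trans (mul_le_mul_of_nonneg_left (hzlip s hs) hB0.le)
      have e4 := hvb s
      have e5 := hb (z 0)
      have e6 := hvlip s hs
      calc ‖(fderiv ℝ h (z s) - fderiv ℝ h (z 0)) (v s) + (fderiv ℝ h (z 0)) (v s - v 0)‖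
          ≤ ‖(fderiv ℝ h (z s) - fderiv ℝ h (z 0)) (v s)‖
            + ‖(fderiv ℝ h (z 0)) (v s - v 0)‖ := norm_add_le _ _
        _ ≤ ‖fderiv ℝ h (z s) - fderiv ℝ h (z 0)‖ * ‖v s‖
            + ‖fderiv ℝ h (z 0)‖ * ‖v s - v 0‖ := add_le_add e1 e2
        _ ≤ (B * (2 * B * s)) * (2 * B) + B * (4 * B ^ 2 * s) := by
            refine add_le_add (mul_le_mul e3 e4 (norm_nonneg _) (by positivity)) ?_
            exact mul_le_mul e5 e6 (norm_nonneg _) hB0.le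
        _ = 8 * B ^ 3 * s := by ring
    have k1 := key f hDfB hDfLip
    have k2 := key f₁ hDf1B hDf1Lip
    have he : a s - a 0 = (fderiv ℝ f (z s) (v s) - fderiv ℝ f (z 0) (v 0))
        + τ • (fderiv ℝ f₁ (z s) (v s) - fderiv ℝ f₁ (z 0) (v 0)) := by
      simp only [hadef, smul_sub]; abel
    rw [he]
    calc ‖_ + _‖ ≤ ‖fderiv ℝ f (z s) (v s) - fderiv ℝ f (z 0) (v 0)‖
          + τ * ‖fderiv ℝ f₁ (z s) (v s) - fderiv ℝ f₁ (z 0) (v 0)‖ := by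
          refine (norm_add_le _ _).trans ?_
          rw [norm_smul, Real.norm_eq_abs, abs_of_pos hτ]
      _ ≤ 8 * B ^ 3 * τ + 1 * (8 * B ^ 3 * τ) := by
          refine add_le_add (k1.trans (mul_le_mul_of_nonneg_left hsτ (by positivity))) ?_
          exact mul_le_mul hτ1 (k2.trans (mul_le_mul_of_nonneg_left hsτ (by positivity)))
            (norm_nonneg _) zero_le_one
      _ = 16 * B ^ 3 * τ := by ring
  -- first MVT step : velocity minus its linearization
  set w : ℝ → EuclideanSpace ℝ (Fin m) := fun s => p s - p 0 - s • a 0 with hwdef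
  have hwd : ∀ s, HasDerivAt w (a s - a 0) s := by
    intro s
    have h2 : HasDerivAt (fun s : ℝ => s • a 0) (a 0) s := by
      simpa using (hasDerivAt_id s).smul_const (a 0)
    exact ((hpd s).sub_const (p 0)).sub h2
  have hwb : ∀ s ∈ Set.Icc (0 : ℝ) τ, ‖w s‖ ≤ 16 * B ^ 3 * τ * s := by
    intro s hs
    have := norm_image_sub_le_of_norm_deriv_le_segment' (a := 0) (b := τ) (f := w)
      (f' := fun s => a s - a 0)
      (fun x hx => (hwd x).hasDerivWithinAt)
      (fun x hx => halip x (Set.mem_Icc_of_Ico hx)) s hs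
    have hw0 : w 0 = 0 := by simp [hwdef]
    rw [hw0, sub_zero, sub_zero] at this
    exact this
  -- second MVT step
  set ψ : ℝ → EuclideanSpace ℝ (Fin m) :=
    fun s => φs τ s - s • p 0 - (s ^ 2 / 2) • a 0 with hψdef
  have hψd : ∀ s, HasDerivAt ψ (w s) s := by
    intro s
    have h1 : HasDerivAt (φs τ) (p s) s := hodeφ τ hτ s
    have h2 : HasDerivAt (fun s : ℝ => s • p 0) (p 0) s := by
      simpa using (hasDerivAt_id s).smul_const (p 0)
    have hs2 : HasDerivAt (fun s : ℝ => s ^ 2 / 2) s s := by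
      have := (hasDerivAt_pow 2 s).div_const 2
      norm_num at this
      exact this
    have h3 : HasDerivAt (fun s : ℝ => (s ^ 2 / 2) • a 0) (s • a 0) s := by
      simpa using hs2.smul_const (a 0)
    exact (h1.sub h2).sub h3
  have hψb : ‖ψ τ - ψ 0‖ ≤ 16 * B ^ 3 * τ * τ * τ := by
    have := norm_image_sub_le_of_norm_deriv_le_segment' (a := 0) (b := τ) (f := ψ) (f' := w)
      (fun x hx => (hψd x).hasDerivWithinAt)
      (fun x hx => by
        have := hwb x (Set.mem_Icc_of_Ico hx)
        have hxτ : x ≤ τ := le_of_lt hx.2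
        have hx0 : 0 ≤ x := hx.1
        calc ‖w x‖ ≤ 16 * B ^ 3 * τ * x := this
          _ ≤ 16 * B ^ 3 * τ * τ := mul_le_mul_of_nonneg_left hxτ (by positivity))
      τ (Set.right_mem_Icc.mpr hτ0)
    simpa [mul_comm] using this
  have hψ0 : ψ 0 = φ0 := by simp [hψdef, hinitφ τ hτ]
  have hmain : ‖φs τ τ - (φ0 + τ • p 0 + (τ ^ 2 / 2) • a 0)‖ ≤ 16 * B ^ 3 * τ ^ 3 := by
    have he : ψ τ - ψ 0 = φs τ τ - (φ0 + τ • p 0 + (τ ^ 2 / 2) • a 0) := by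
      rw [hψ0, hψdef]; dsimp only; abel
    rw [← he]
    calc ‖ψ τ - ψ 0‖ ≤ 16 * B ^ 3 * τ * τ * τ := hψb
      _ = 16 * B ^ 3 * τ ^ 3 := by ring
  -- algebra : identify the second-order Taylor polynomial
  have hp0 : p 0 = f (φ0, θ0) + τ • f₁ (φ0, θ0) := by rw [hpdef]; simp [hz0]
  have hq0 : q 0 = g (φ0, θ0) + (c * τ) • g₁ (φ0, θ0) := by rw [hqdef]; simp [hz0]
  have hv0 : v 0 = (p 0, q 0) := rfl
  have ha0 : a 0 = fderiv ℝ f (φ0, θ0) (v 0) + τ • fderiv ℝ f₁ (φ0, θ0) (v 0) := by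
    rw [hadef]; simp [hz0]
  have hsplit : fderiv ℝ f (φ0, θ0) (v 0)
      = fderiv ℝ f (φ0, θ0) (f (φ0, θ0), 0) + fderiv ℝ f (φ0, θ0) (0, g (φ0, θ0))
        + τ • fderiv ℝ f (φ0, θ0) (f₁ (φ0, θ0), 0)
        + (c * τ) • fderiv ℝ f (φ0, θ0) (0, g₁ (φ0, θ0)) := by
    have hv : v 0 = ((f (φ0, θ0), (0 : EuclideanSpace ℝ (Fin n)))
        + ((0 : EuclideanSpace ℝ (Fin m)), g (φ0, θ0)))
        + τ • (f₁ (φ0, θ0), (0 : EuclideanSpace ℝ (Fin n)))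
        + (c * τ) • ((0 : EuclideanSpace ℝ (Fin m)), g₁ (φ0, θ0)) := by
      rw [hv0, hp0, hq0]
      apply Prod.ext <;> simp
    rw [hv, map_add, map_add, map_add, map_smul, map_smul]
  set R : EuclideanSpace ℝ (Fin m) :=
    fderiv ℝ f (φ0, θ0) (f₁ (φ0, θ0), 0) + c • fderiv ℝ f (φ0, θ0) (0, g₁ (φ0, θ0))
      + fderiv ℝ f₁ (φ0, θ0) (v 0) with hRdef
  have hkey : φ0 + τ • p 0 + (τ ^ 2 / 2) • a 0
      = (φ0 + τ • f (φ0, θ0) +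
          (τ ^ 2) • (f₁ (φ0, θ0) + (1 / 2 : ℝ) • fderiv ℝ f (φ0, θ0) (f (φ0, θ0), 0) +
            (1 / 2 : ℝ) • fderiv ℝ f (φ0, θ0) (0, g (φ0, θ0))))
        + (τ ^ 3 / 2) • R := by
    rw [hRdef, hp0, ha0, hsplit]
    module
  have hRb : ‖R‖ ≤ (3 + c) * B ^ 2 := by
    have e1 : ‖fderiv ℝ f (φ0, θ0) (f₁ (φ0, θ0), (0 : EuclideanSpace ℝ (Fin n)))‖ ≤ B * B := by
      refine (ContinuousLinearMap.le_opNorm _ _).trans ?_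
      have : ‖(f₁ (φ0, θ0), (0 : EuclideanSpace ℝ (Fin n)))‖ ≤ B := by
        rw [Prod.norm_def]
        exact max_le (hf1B _) (by simpa using hB0.le)
      exact mul_le_mul (hDfB _) this (norm_nonneg _) hB0.le
    have e2 : ‖fderiv ℝ f (φ0, θ0) ((0 : EuclideanSpace ℝ (Fin m)), g₁ (φ0, θ0))‖ ≤ B * B := by
      refine (ContinuousLinearMap.le_opNorm _ _).trans ?_
      have : ‖((0 : EuclideanSpace ℝ (Fin m)), g₁ (φ0, θ0))‖ ≤ B := by
        rw [Prod.norm_def]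
        exact max_le (by simpa using hB0.le) (hg1B _)
      exact mul_le_mul (hDfB _) this (norm_nonneg _) hB0.le
    have e3 : ‖fderiv ℝ f₁ (φ0, θ0) (v 0)‖ ≤ B * (2 * B) := by
      refine (ContinuousLinearMap.le_opNorm _ _).trans ?_
      exact mul_le_mul (hDf1B _) (hvb 0) (norm_nonneg _) hB0.le
    rw [hRdef]
    calc ‖_ + _ + _‖ ≤ ‖fderiv ℝ f (φ0, θ0) (f₁ (φ0, θ0), 0)‖
          + c * ‖fderiv ℝ f (φ0, θ0) (0, g₁ (φ0, θ0))‖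
          + ‖fderiv ℝ f₁ (φ0, θ0) (v 0)‖ := by
          refine (norm_add_le _ _).trans ?_
          refine add_le_add ((norm_add_le _ _).trans (add_le_add le_rfl ?_)) le_rfl
          rw [norm_smul, Real.norm_eq_abs, abs_of_pos hc]
      _ ≤ B * B + c * (B * B) + B * (2 * B) := by
          refine add_le_add (add_le_add e1 ?_) e3
          exact mul_le_mul_of_nonneg_left e2 hc.le
      _ = (3 + c) * B ^ 2 := by ring
  -- conclusion
  have hdecomp : φs τ τ -
      (φ0 + τ • f (φ0, θ0) +
        (τ ^ 2) • (f₁ (φ0, θ0) + (1 / 2 : ℝ) • fderiv ℝ f (φ0, θ0) (f (φ0, θ0), 0) +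
          (1 / 2 : ℝ) • fderiv ℝ f (φ0, θ0) (0, g (φ0, θ0))))
      = (φs τ τ - (φ0 + τ • p 0 + (τ ^ 2 / 2) • a 0)) + (τ ^ 3 / 2) • R := by
    rw [hkey]; abel
  rw [hdecomp]
  calc ‖_ + _‖ ≤ ‖φs τ τ - (φ0 + τ • p 0 + (τ ^ 2 / 2) • a 0)‖ + ‖(τ ^ 3 / 2) • R‖ :=
        norm_add_le _ _
    _ ≤ 16 * B ^ 3 * τ ^ 3 + (τ ^ 3 / 2) * ((3 + c) * B ^ 2) := by
        refine add_le_add hmain ?_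
        rw [norm_smul, Real.norm_eq_abs, abs_of_nonneg (by positivity)]
        exact mul_le_mul_of_nonneg_left hRb (by positivity)
    _ ≤ (16 * B ^ 3 + (3 + c) * B ^ 2) * τ ^ 3 := by
        have h1 : 0 ≤ ((3 + c) * B ^ 2) * τ ^ 3 := by positivity
        linarith
end
end

section
/- Let f : ℝ^m × ℝ^n → ℝ^m be twice continuously differentiable with bounded derivatives, fix θ₀ ∈ ℝ^n, φ₀ ∈ ℝ^m and a positive integer m'. For h > 0 define iterates φ^{(i)} = φ^{(i−1)} + h·f(φ^{(i−1)}, θ₀), i = 1,…,m', with φ^{(0)} = φ₀. Then φ^{(m')} = φ₀ + m'h·f(φ₀, θ₀) + (m'(m'−1)/2)·h²·f(φ₀, θ₀)·∇_φ f(φ₀, θ₀) + O(h³), i.e. there exist C > 0 and h₀ > 0 such that the difference between the two sides is at most C h³ in norm for all 0 < h < h₀. -/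
set_option maxHeartbeats 1000000

noncomputable section

open Set Finset

private lemma taylor_quad {E F' : Type*} [NormedAddCommGroup E] [NormedSpace ℝ E]
    [NormedAddCommGroup F'] [NormedSpace ℝ F'] (f : E → F') (hf : ContDiff ℝ 2 f)
    (M : ℝ) (hM : ∀ z, ‖fderiv ℝ (fderiv ℝ f) z‖ ≤ M) (z0 z : E) :
    ‖f z - f z0 - fderiv ℝ f z0 (z - z0)‖ ≤ M * ‖z - z0‖ ^ 2 := by
  have hM0 : 0 ≤ M := le_trans (norm_nonneg (fderiv ℝ (fderiv ℝ f) z0)) (hM z0)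
  have hd1 : Differentiable ℝ f := hf.differentiable (by norm_num)
  have hd2 : Differentiable ℝ (fderiv ℝ f) :=
    (hf.fderiv_right (m := 1) (by norm_num)).differentiable one_ne_zero
  have lip : ∀ a : E, ‖fderiv ℝ f a - fderiv ℝ f z0‖ ≤ M * ‖a - z0‖ := fun a =>
    (convex_univ).norm_image_sub_le_of_norm_fderiv_le
      (fun x _ => hd2 x) (fun x _ => hM x) (mem_univ z0) (mem_univ a)
  have seg : ∀ x ∈ segment ℝ z0 z, ‖fderiv ℝ f x - fderiv ℝ f z0‖ ≤ M * ‖z - z0‖ := by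
    rintro x ⟨a, b, ha, hb, hab, rfl⟩
    have ha' : a = 1 - b := by linarith
    subst ha'
    have hx : (1 - b) • z0 + b • z - z0 = b • (z - z0) := by module
    refine le_trans (lip _) ?_
    rw [hx, norm_smul, Real.norm_of_nonneg hb]
    have hb1 : b ≤ 1 := by linarith
    have : b * ‖z - z0‖ ≤ ‖z - z0‖ := mul_le_of_le_one_left (norm_nonneg _) hb1
    exact mul_le_mul_of_nonneg_left this hM0
  have := (convex_segment z0 z).norm_image_sub_le_of_norm_fderiv_le'
    (fun x _ => hd1 x) seg (left_mem_segment ℝ z0 z) (right_mem_segment ℝ z0 z)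
  calc ‖f z - f z0 - fderiv ℝ f z0 (z - z0)‖ ≤ M * ‖z - z0‖ * ‖z - z0‖ := this
    _ = M * ‖z - z0‖ ^ 2 := by ring

private def cgeom (A L : ℝ) : ℕ → ℝ
  | 0 => 0
  | (i + 1) => (1 + L) * cgeom A L i + A

private lemma cgeom_nonneg {A L : ℝ} (hA : 0 ≤ A) (hL : 0 ≤ L) : ∀ i, 0 ≤ cgeom A L i
  | 0 => le_refl 0
  | (i + 1) => by
      have := cgeom_nonneg hA hL i
      simp only [cgeom]
      nlinarith

/-- **Lemma (multiple Euler sub-steps of one player).** -/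
theorem frozen_player_euler_iterates_expansion {m n : ℕ}
    (f : EuclideanSpace ℝ (Fin m) × EuclideanSpace ℝ (Fin n) → EuclideanSpace ℝ (Fin m))
    (hf : ContDiff ℝ 2 f)
    (hfb : ∀ i : ℕ, i ≤ 2 → ∃ C : ℝ, ∀ z, ‖iteratedFDeriv ℝ i f z‖ ≤ C)
    (θ0 : EuclideanSpace ℝ (Fin n)) (φ0 : EuclideanSpace ℝ (Fin m))
    (m' : ℕ) (hm' : 0 < m')
    -- the iterates `φit h i` for step size `h`
    (φit : ℝ → ℕ → EuclideanSpace ℝ (Fin m))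
    (hφit0 : ∀ h : ℝ, φit h 0 = φ0)
    (hφitS : ∀ h : ℝ, ∀ i : ℕ, i < m' →
      φit h (i + 1) = φit h i + h • f (φit h i, θ0)) :
    ∃ C > (0 : ℝ), ∃ h0 > (0 : ℝ), ∀ h : ℝ, 0 < h → h < h0 →
      ‖φit h m' -
          (φ0 + ((m' : ℝ) * h) • f (φ0, θ0) +
            ((m' : ℝ) * ((m' : ℝ) - 1) / 2 * h ^ 2) •
              fderiv ℝ f (φ0, θ0) (f (φ0, θ0), 0))‖ ≤ C * h ^ 3 := by
  classical
  obtain ⟨B0, hB0'⟩ := hfb 0 (by norm_num)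
  obtain ⟨L0, hL0'⟩ := hfb 1 (by norm_num)
  obtain ⟨M0, hM0'⟩ := hfb 2 le_rfl
  have hB : ∀ z, ‖f z‖ ≤ B0 := by
    intro z
    have := hB0' z
    rwa [norm_iteratedFDeriv_zero] at this
  have hL : ∀ z, ‖fderiv ℝ f z‖ ≤ L0 := by
    intro z
    calc ‖fderiv ℝ f z‖ = ‖iteratedFDeriv ℝ 0 (fderiv ℝ f) z‖ :=
          (norm_iteratedFDeriv_zero).symm
      _ = ‖iteratedFDeriv ℝ 1 f z‖ := norm_iteratedFDeriv_fderiv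
      _ ≤ L0 := hL0' z
  have hM : ∀ z, ‖fderiv ℝ (fderiv ℝ f) z‖ ≤ M0 := by
    intro z
    calc ‖fderiv ℝ (fderiv ℝ f) z‖ = ‖iteratedFDeriv ℝ 0 (fderiv ℝ (fderiv ℝ f)) z‖ :=
          (norm_iteratedFDeriv_zero (f := fderiv ℝ (fderiv ℝ f)) (x := z)).symm
      _ = ‖iteratedFDeriv ℝ 1 (fderiv ℝ f) z‖ := norm_iteratedFDeriv_fderiv
      _ = ‖iteratedFDeriv ℝ 2 f z‖ := norm_iteratedFDeriv_fderiv
      _ ≤ M0 := hM0' z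
  have hB0 : 0 ≤ B0 := le_trans (norm_nonneg _) (hB (φ0, θ0))
  have hL0 : 0 ≤ L0 := le_trans (norm_nonneg _) (hL (φ0, θ0))
  have hM0 : 0 ≤ M0 := le_trans (norm_nonneg (fderiv ℝ (fderiv ℝ f) (φ0, θ0))) (hM (φ0, θ0))
  set F := f (φ0, θ0) with hFdef
  set Dm := fderiv ℝ f (φ0, θ0) with hDmdef
  set D := Dm (F, 0) with hDdef
  have pnorm : ∀ v : EuclideanSpace ℝ (Fin m),
      ‖((v, (0 : EuclideanSpace ℝ (Fin n))) : _ × _)‖ = ‖v‖ := by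
    intro v
    simp [Prod.norm_def]
  have hDnorm : ‖D‖ ≤ L0 * B0 := by
    calc ‖D‖ ≤ ‖Dm‖ * ‖((F, (0 : EuclideanSpace ℝ (Fin n))) : _ × _)‖ := Dm.le_opNorm _
      _ = ‖Dm‖ * ‖F‖ := by rw [pnorm]
      _ ≤ L0 * B0 := mul_le_mul (hL _) (hB _) (norm_nonneg _) hL0
  set A : ℝ := (m' : ℝ) ^ 2 * (M0 * B0 ^ 2 + L0 ^ 2 * B0 / 2) with hAdef
  have hA : 0 ≤ A := by positivity
  set c : ℕ → ℝ := cgeom A L0 with hcdef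
  have hc0 : ∀ i, 0 ≤ c i := cgeom_nonneg hA hL0
  have hcsucc : ∀ i, c (i + 1) = (1 + L0) * c i + A := fun i => rfl
  refine ⟨c m' + 1, by linarith [hc0 m'], 1, one_pos, ?_⟩
  intro h hh hh1
  -- growth bound
  have key1 : ∀ i, i ≤ m' → ‖φit h i - φ0‖ ≤ (i : ℝ) * h * B0 := by
    intro i
    induction i with
    | zero => intro _; simp [hφit0 h]
    | succ i ih =>
      intro hi
      have hi' : i < m' := lt_of_lt_of_le (Nat.lt_succ_self i) hi
      rw [hφitS h i hi']
      have : φit h i + h • f (φit h i, θ0) - φ0 =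
          (φit h i - φ0) + h • f (φit h i, θ0) := by abel
      rw [this]
      calc ‖(φit h i - φ0) + h • f (φit h i, θ0)‖
          ≤ ‖φit h i - φ0‖ + ‖h • f (φit h i, θ0)‖ := norm_add_le _ _
        _ ≤ (i : ℝ) * h * B0 + h * B0 := by
            rw [norm_smul, Real.norm_of_nonneg hh.le]
            exact add_le_add (ih (le_of_lt hi')) (mul_le_mul_of_nonneg_left (hB _) hh.le)
        _ = ((i : ℕ) + 1 : ℝ) * h * B0 := by ring
        _ = (((i + 1 : ℕ)) : ℝ) * h * B0 := by push_cast; ring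
  -- target
  set Tg : ℕ → EuclideanSpace ℝ (Fin m) := fun i =>
    φ0 + ((i : ℝ) * h) • F + ((i : ℝ) * ((i : ℝ) - 1) / 2 * h ^ 2) • D with hTgdef
  have key2 : ∀ i, i ≤ m' → ‖φit h i - Tg i‖ ≤ c i * h ^ 3 := by
    intro i
    induction i with
    | zero =>
      intro _
      have : Tg 0 = φ0 := by simp [hTgdef]
      rw [this, hφit0 h, sub_self, norm_zero]
      have : c 0 = 0 := rfl
      rw [this]; positivity
    | succ i ih =>
      intro hi
      have hi' : i < m' := lt_of_lt_of_le (Nat.lt_succ_self i) hi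
      have him : (i : ℝ) ≤ (m' : ℝ) := by exact_mod_cast le_of_lt hi'
      have hin : (0 : ℝ) ≤ (i : ℝ) := Nat.cast_nonneg i
      set u := φit h i with hudef
      have hei : ‖u - Tg i‖ ≤ c i * h ^ 3 := ih (le_of_lt hi')
      set T := f (u, θ0) - F - Dm (u - φ0, 0) with hTdef
      have hznorm : ((u, θ0) : _ × _) - (φ0, θ0) = (u - φ0, (0 : EuclideanSpace ℝ (Fin n))) := by
        rw [Prod.mk_sub_mk, sub_self]
      have hT : ‖T‖ ≤ M0 * ‖u - φ0‖ ^ 2 := by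
        have := taylor_quad f hf M0 hM (φ0, θ0) (u, θ0)
        rw [hznorm, pnorm] at this
        exact this
      set r := u - φ0 - ((i : ℝ) * h) • F with hrdef
      have hlin : Dm (u - φ0, (0 : EuclideanSpace ℝ (Fin n))) =
          ((i : ℝ) * h) • D + Dm (r, 0) := by
        have hsplit : ((u - φ0, (0 : EuclideanSpace ℝ (Fin n))) :
            EuclideanSpace ℝ (Fin m) × EuclideanSpace ℝ (Fin n)) =
            ((i : ℝ) * h) • ((F, 0) : EuclideanSpace ℝ (Fin m) × EuclideanSpace ℝ (Fin n))
              + (r, 0) := by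
          rw [Prod.smul_mk, Prod.mk_add_mk, smul_zero, zero_add, Prod.mk.injEq]
          constructor
          · rw [hrdef]; abel
          · rfl
        rw [hsplit, map_add, map_smul, ← hDdef]
      have hfu : f (u, θ0) = F + (((i : ℝ) * h) • D + Dm (r, 0)) + T := by
        rw [← hlin, hTdef]; abel
      have keyid : φit h (i + 1) - Tg (i + 1) = (u - Tg i) + h • T + h • Dm (r, 0) := by
        rw [hφitS h i hi', ← hudef, hfu, hTgdef]
        have cast1 : (((i + 1 : ℕ)) : ℝ) = (i : ℝ) + 1 := by push_cast; ring
        simp only [cast1]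
        module
      have hrbound : ‖r‖ ≤ (i : ℝ) * ((i : ℝ) - 1) / 2 * h ^ 2 * (L0 * B0) + c i * h ^ 3 := by
        have hr2 : r = ((i : ℝ) * ((i : ℝ) - 1) / 2 * h ^ 2) • D + (u - Tg i) := by
          rw [hrdef, hTgdef]; module
        have hnn : (0 : ℝ) ≤ (i : ℝ) * ((i : ℝ) - 1) := by
          rcases Nat.eq_zero_or_pos i with h0 | h1
          · simp [h0]
          · have : (1 : ℝ) ≤ (i : ℝ) := by exact_mod_cast h1
            nlinarith
        calc ‖r‖ ≤ ‖((i : ℝ) * ((i : ℝ) - 1) / 2 * h ^ 2) • D‖ + ‖u - Tg i‖ := by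
              rw [hr2]; exact norm_add_le _ _
          _ ≤ (i : ℝ) * ((i : ℝ) - 1) / 2 * h ^ 2 * (L0 * B0) + c i * h ^ 3 := by
              rw [norm_smul, Real.norm_of_nonneg (by positivity)]
              exact add_le_add (mul_le_mul_of_nonneg_left hDnorm (by positivity)) hei
      have hDr : ‖Dm (r, (0 : EuclideanSpace ℝ (Fin n)))‖ ≤ L0 * ‖r‖ := by
        calc ‖Dm (r, (0 : EuclideanSpace ℝ (Fin n)))‖ ≤ ‖Dm‖ * ‖((r, (0 : EuclideanSpace ℝ (Fin n))) : _ × _)‖ :=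
              Dm.le_opNorm _
          _ = ‖Dm‖ * ‖r‖ := by rw [pnorm]
          _ ≤ L0 * ‖r‖ := mul_le_mul_of_nonneg_right (hL _) (norm_nonneg _)
      have hgrow : ‖u - φ0‖ ≤ (i : ℝ) * h * B0 := key1 i (le_of_lt hi')
      have hgrow2 : ‖u - φ0‖ ^ 2 ≤ ((i : ℝ) * h * B0) ^ 2 :=
        pow_le_pow_left₀ (norm_nonneg _) hgrow 2
      have final : ‖φit h (i + 1) - Tg (i + 1)‖ ≤ c i * h ^ 3 + h * ‖T‖ + h * ‖Dm (r, 0)‖ := by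
        rw [keyid]
        calc ‖(u - Tg i) + h • T + h • Dm (r, 0)‖
            ≤ ‖(u - Tg i) + h • T‖ + ‖h • Dm (r, 0)‖ := norm_add_le _ _
          _ ≤ ‖u - Tg i‖ + ‖h • T‖ + ‖h • Dm (r, 0)‖ := by
              gcongr; exact norm_add_le _ _
          _ = ‖u - Tg i‖ + h * ‖T‖ + h * ‖Dm (r, 0)‖ := by
              rw [norm_smul, norm_smul, Real.norm_of_nonneg hh.le]
          _ ≤ c i * h ^ 3 + h * ‖T‖ + h * ‖Dm (r, 0)‖ := by gcongr
      have hci := hc0 i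
      have goal2 : c i * h ^ 3 + h * ‖T‖ + h * ‖Dm (r, 0)‖ ≤ c (i + 1) * h ^ 3 := by
        rw [hcsucc i]
        have hci := hc0 i
        have hsq : (i : ℝ) ^ 2 ≤ (m' : ℝ) ^ 2 := by nlinarith
        have hii : (i : ℝ) * ((i : ℝ) - 1) ≤ (m' : ℝ) ^ 2 := by nlinarith
        have h1 : h * ‖T‖ ≤ h * (M0 * ((i : ℝ) * h * B0) ^ 2) := by
          apply mul_le_mul_of_nonneg_left _ hh.le
          exact le_trans hT (mul_le_mul_of_nonneg_left hgrow2 hM0)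
        have h2 : h * ‖Dm (r, (0 : EuclideanSpace ℝ (Fin n)))‖ ≤
            h * (L0 * ((i : ℝ) * ((i : ℝ) - 1) / 2 * h ^ 2 * (L0 * B0) + c i * h ^ 3)) := by
          apply mul_le_mul_of_nonneg_left _ hh.le
          exact le_trans hDr (mul_le_mul_of_nonneg_left hrbound hL0)
        have t1 : h * (M0 * ((i : ℝ) * h * B0) ^ 2) ≤ M0 * B0 ^ 2 * (m' : ℝ) ^ 2 * h ^ 3 := by
          calc h * (M0 * ((i : ℝ) * h * B0) ^ 2)
              = (M0 * B0 ^ 2 * h ^ 3) * (i : ℝ) ^ 2 := by ring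
            _ ≤ (M0 * B0 ^ 2 * h ^ 3) * (m' : ℝ) ^ 2 :=
                mul_le_mul_of_nonneg_left hsq (by positivity)
            _ = M0 * B0 ^ 2 * (m' : ℝ) ^ 2 * h ^ 3 := by ring
        have t2 : h * (L0 * ((i : ℝ) * ((i : ℝ) - 1) / 2 * h ^ 2 * (L0 * B0) + c i * h ^ 3)) ≤
            L0 ^ 2 * B0 * (m' : ℝ) ^ 2 / 2 * h ^ 3 + L0 * c i * h ^ 3 := by
          have e2 : h * (L0 * ((i : ℝ) * ((i : ℝ) - 1) / 2 * h ^ 2 * (L0 * B0) + c i * h ^ 3)) =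
              (L0 ^ 2 * B0 / 2 * h ^ 3) * ((i : ℝ) * ((i : ℝ) - 1)) + L0 * c i * h ^ 3 * h := by
            ring
          rw [e2]
          have a1 : (L0 ^ 2 * B0 / 2 * h ^ 3) * ((i : ℝ) * ((i : ℝ) - 1)) ≤
              L0 ^ 2 * B0 * (m' : ℝ) ^ 2 / 2 * h ^ 3 := by
            calc (L0 ^ 2 * B0 / 2 * h ^ 3) * ((i : ℝ) * ((i : ℝ) - 1))
                ≤ (L0 ^ 2 * B0 / 2 * h ^ 3) * (m' : ℝ) ^ 2 :=
                  mul_le_mul_of_nonneg_left hii (by positivity)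
              _ = L0 ^ 2 * B0 * (m' : ℝ) ^ 2 / 2 * h ^ 3 := by ring
          have a2 : L0 * c i * h ^ 3 * h ≤ L0 * c i * h ^ 3 := by
            have hnn : 0 ≤ L0 * c i * h ^ 3 :=
              mul_nonneg (mul_nonneg hL0 hci) (pow_nonneg hh.le 3)
            calc L0 * c i * h ^ 3 * h ≤ L0 * c i * h ^ 3 * 1 :=
                  mul_le_mul_of_nonneg_left hh1.le hnn
              _ = L0 * c i * h ^ 3 := mul_one _
          linarith
        have hfin : c i * h ^ 3 + M0 * B0 ^ 2 * (m' : ℝ) ^ 2 * h ^ 3 +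
            (L0 ^ 2 * B0 * (m' : ℝ) ^ 2 / 2 * h ^ 3 + L0 * c i * h ^ 3) =
            ((1 + L0) * c i + A) * h ^ 3 := by
          rw [hAdef]; ring
        linarith
      exact le_trans final goal2
  have := key2 m' le_rfl
  have hTg : Tg m' = φ0 + ((m' : ℝ) * h) • F +
      ((m' : ℝ) * ((m' : ℝ) - 1) / 2 * h ^ 2) • D := rfl
  calc ‖φit h m' - (φ0 + ((m' : ℝ) * h) • F +
        ((m' : ℝ) * ((m' : ℝ) - 1) / 2 * h ^ 2) • D)‖ = ‖φit h m' - Tg m'‖ := by rw [hTg]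
    _ ≤ c m' * h ^ 3 := this
    _ ≤ (c m' + 1) * h ^ 3 := by nlinarith [hc0 m']
end
end

section
/- Let f : ℝ^m × ℝ^n → ℝ^m and g : ℝ^m × ℝ^n → ℝ^n be twice continuously differentiable, let (φ*, θ*) satisfy f(φ*, θ*) = 0 and g(φ*, θ*) = 0, and let f̃ = f − (αh/2)(f·∇_φ f + g·∇_θ f), g̃ = g − (λh/2)(f·∇_φ g + g·∇_θ g) be the modified vector fields of simultaneous gradient descent. Then the Jacobian of (f̃, g̃) at (φ*, θ*) equals J − (h/2)·K, where J is the Jacobian of (f, g) at (φ*, θ*) and K is the block matrix with blocks K₁₁ = α((∇_φ f)² + ∇_φ g·∇_θ f), K₁₂ = α(∇_θ f·∇_φ f + ∇_θ g·∇_θ f), K₂₁ = λ(∇_φ g·∇_θ g + ∇_φ f·∇_φ g), K₂₂ = λ((∇_θ g)² + ∇_θ f·∇_φ g), all blocks evaluated at (φ*, θ*). -/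
noncomputable section

/-- Partial (Fréchet) derivative with respect to the first player's parameters `φ`. -/
def dPhi {m n : ℕ} {W : Type*} [NormedAddCommGroup W] [NormedSpace ℝ W]
    (f : EuclideanSpace ℝ (Fin m) × EuclideanSpace ℝ (Fin n) → W)
    (z : EuclideanSpace ℝ (Fin m) × EuclideanSpace ℝ (Fin n)) :
    EuclideanSpace ℝ (Fin m) →L[ℝ] W :=
  (fderiv ℝ f z).comp (ContinuousLinearMap.inl ℝ (EuclideanSpace ℝ (Fin m)) (EuclideanSpace ℝ (Fin n)))

/-- Partial (Fréchet) derivative with respect to the second player's parameters `θ`. -/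
def dTheta {m n : ℕ} {W : Type*} [NormedAddCommGroup W] [NormedSpace ℝ W]
    (f : EuclideanSpace ℝ (Fin m) × EuclideanSpace ℝ (Fin n) → W)
    (z : EuclideanSpace ℝ (Fin m) × EuclideanSpace ℝ (Fin n)) :
    EuclideanSpace ℝ (Fin n) →L[ℝ] W :=
  (fderiv ℝ f z).comp (ContinuousLinearMap.inr ℝ (EuclideanSpace ℝ (Fin m)) (EuclideanSpace ℝ (Fin n)))

/-- **Modified Jacobian at an equilibrium (simultaneous gradient descent).**
At an equilibrium `f = 0 = g`, the Jacobian of the modified vector field of simultaneous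
gradient descent equals `J − (h/2)·K` with the blocks of `K` as in the paper. -/
theorem modified_jacobian_simultaneous {m n : ℕ}
    (f : EuclideanSpace ℝ (Fin m) × EuclideanSpace ℝ (Fin n) → EuclideanSpace ℝ (Fin m))
    (g : EuclideanSpace ℝ (Fin m) × EuclideanSpace ℝ (Fin n) → EuclideanSpace ℝ (Fin n))
    (hf : ContDiff ℝ 2 f) (hg : ContDiff ℝ 2 g)
    (zs : EuclideanSpace ℝ (Fin m) × EuclideanSpace ℝ (Fin n))
    (hfz : f zs = 0) (hgz : g zs = 0)
    (α lam h : ℝ) (hα : 0 < α) (hlam : 0 < lam) (hh : 0 < h)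
    (Ftilde : EuclideanSpace ℝ (Fin m) × EuclideanSpace ℝ (Fin n) →
      EuclideanSpace ℝ (Fin m) × EuclideanSpace ℝ (Fin n))
    (hFtilde : Ftilde = fun z =>
      (f z - (α * h / 2) • fderiv ℝ f z (f z, g z),
       g z - (lam * h / 2) • fderiv ℝ g z (f z, g z))) :
    fderiv ℝ Ftilde zs =
      fderiv ℝ (fun z => (f z, g z)) zs -
        (h / 2) •
          (ContinuousLinearMap.prod
            ((α • (dPhi f zs ∘L dPhi f zs + dTheta f zs ∘L dPhi g zs)).coprod
              (α • (dPhi f zs ∘L dTheta f zs + dTheta f zs ∘L dTheta g zs)))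
            ((lam • (dTheta g zs ∘L dPhi g zs + dPhi g zs ∘L dPhi f zs)).coprod
              (lam • (dTheta g zs ∘L dTheta g zs + dPhi g zs ∘L dTheta f zs)))) := by
  have hf1 : Differentiable ℝ f := hf.differentiable (by norm_num)
  have hg1 : Differentiable ℝ g := hg.differentiable (by norm_num)
  have hF : Differentiable ℝ (fun z => (f z, g z)) := hf1.prodMk hg1
  have hdf : Differentiable ℝ (fderiv ℝ f) :=
    (hf.fderiv_right (m := 1) (by norm_num)).differentiable (by norm_num)
  have hdg : Differentiable ℝ (fderiv ℝ g) :=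
    (hg.fderiv_right (m := 1) (by norm_num)).differentiable (by norm_num)
  have hA : DifferentiableAt ℝ (fun z => fderiv ℝ f z (f z, g z)) zs :=
    (hdf zs).clm_apply (hF zs)
  have hB : DifferentiableAt ℝ (fun z => fderiv ℝ g z (f z, g z)) zs :=
    (hdg zs).clm_apply (hF zs)
  have hDF : fderiv ℝ (fun z => (f z, g z)) zs = (fderiv ℝ f zs).prod (fderiv ℝ g zs) :=
    (hf1 zs).fderiv_prodMk (hg1 zs)
  have h1 : fderiv ℝ (fun z => fderiv ℝ f z (f z, g z)) zs
      = (fderiv ℝ f zs).comp (fderiv ℝ (fun z => (f z, g z)) zs) := by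
    rw [fderiv_clm_apply (hdf zs) (hF zs)]
    simp [hfz, hgz, Prod.ext_iff, Prod.mk_zero_zero, map_zero]
  have h2 : fderiv ℝ (fun z => fderiv ℝ g z (f z, g z)) zs
      = (fderiv ℝ g zs).comp (fderiv ℝ (fun z => (f z, g z)) zs) := by
    rw [fderiv_clm_apply (hdg zs) (hF zs)]
    simp [hfz, hgz, Prod.ext_iff, Prod.mk_zero_zero, map_zero]
  have hFt : fderiv ℝ Ftilde zs
      = (fderiv ℝ f zs - (α * h / 2) • (fderiv ℝ f zs).comp (fderiv ℝ (fun z => (f z, g z)) zs)).prod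
        (fderiv ℝ g zs - (lam * h / 2) • (fderiv ℝ g zs).comp (fderiv ℝ (fun z => (f z, g z)) zs)) := by
    rw [hFtilde]
    rw [DifferentiableAt.fderiv_prodMk (show DifferentiableAt ℝ (fun z => f z - (α * h / 2) • fderiv ℝ f z (f z, g z)) zs from (hf1 zs).sub (show DifferentiableAt ℝ (fun z => (α * h / 2) • fderiv ℝ f z (f z, g z)) zs from hA.const_smul (α * h / 2))) (show DifferentiableAt ℝ (fun z => g z - (lam * h / 2) • fderiv ℝ g z (f z, g z)) zs from (hg1 zs).sub (show DifferentiableAt ℝ (fun z => (lam * h / 2) • fderiv ℝ g z (f z, g z)) zs from hB.const_smul (lam * h / 2)))]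
    rw [fderiv_fun_sub (hf1 zs) (show DifferentiableAt ℝ (fun z => (α * h / 2) • fderiv ℝ f z (f z, g z)) zs from hA.const_smul (α * h / 2)), fderiv_fun_sub (hg1 zs) (show DifferentiableAt ℝ (fun z => (lam * h / 2) • fderiv ℝ g z (f z, g z)) zs from hB.const_smul (lam * h / 2)),
      fderiv_fun_const_smul hA, fderiv_fun_const_smul hB, h1, h2]
  rw [hFt, hDF]
  have key : ∀ {W : Type} [NormedAddCommGroup W] [NormedSpace ℝ W]
      (D : (EuclideanSpace ℝ (Fin m) × EuclideanSpace ℝ (Fin n)) →L[ℝ] W)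
      (v : EuclideanSpace ℝ (Fin m) × EuclideanSpace ℝ (Fin n)),
      D (fderiv ℝ f zs v, fderiv ℝ g zs v) =
        (D (fderiv ℝ f zs (v.1, 0), 0) + D (0, fderiv ℝ g zs (v.1, 0))) +
        (D (fderiv ℝ f zs (0, v.2), 0) + D (0, fderiv ℝ g zs (0, v.2))) := by
    intro W _ _ D v
    have split : ∀ (a : EuclideanSpace ℝ (Fin m)) (b : EuclideanSpace ℝ (Fin n)),
        D (a, b) = D (a, 0) + D (0, b) := by
      intro a b; rw [← map_add]; norm_num
    have splitf : ∀ (a b : EuclideanSpace ℝ (Fin m)),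
        D (a + b, (0 : EuclideanSpace ℝ (Fin n))) = D (a, 0) + D (b, 0) := by
      intro a b; rw [← map_add]; norm_num
    have splitg : ∀ (a b : EuclideanSpace ℝ (Fin n)),
        D ((0 : EuclideanSpace ℝ (Fin m)), a + b) = D (0, a) + D (0, b) := by
      intro a b; rw [← map_add]; norm_num
    have hv : v = (v.1, 0) + (0, v.2) := by simp
    rw [split, show fderiv ℝ f zs v = fderiv ℝ f zs (v.1, 0) + fderiv ℝ f zs (0, v.2) by
        conv_lhs => rw [hv, map_add],
      show fderiv ℝ g zs v = fderiv ℝ g zs (v.1, 0) + fderiv ℝ g zs (0, v.2) by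
        conv_lhs => rw [hv, map_add],
      splitf, splitg]
    abel
  refine ContinuousLinearMap.ext fun v => Prod.ext ?_ ?_ <;>
  · simp only [ContinuousLinearMap.prod_apply, ContinuousLinearMap.sub_apply,
      ContinuousLinearMap.smul_apply, ContinuousLinearMap.coprod_apply,
      ContinuousLinearMap.comp_apply, ContinuousLinearMap.add_apply,
      dPhi, dTheta, ContinuousLinearMap.inl_apply, ContinuousLinearMap.inr_apply]
    simp only [Prod.fst_sub, Prod.snd_sub, Prod.smul_fst, Prod.smul_snd]
    rw [key _ v]
    module
end
end

section
/- Under the hypotheses of the previous statement (f(φ*, θ*) = 0 = g(φ*, θ*), f, g twice continuously differentiable), the trace of the modified Jacobian J̃ of simultaneous gradient descent at the equilibrium satisfies Tr(J̃) = Tr(J) − (h/2)(α·Tr((∇_φ f)²) + λ·Tr((∇_θ g)²)) − (h/2)(α + λ)·Tr(∇_φ g · ∇_θ f), where J is the Jacobian of (f, g) at (φ*, θ*) and all Jacobian blocks are evaluated at (φ*, θ*). -/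
noncomputable section

lemma trace_prod_decomp {E F : Type*} [AddCommGroup E] [Module ℝ E] [AddCommGroup F] [Module ℝ F]
    [Module.Finite ℝ E] [Module.Free ℝ E] [Module.Finite ℝ F] [Module.Free ℝ F]
    (M : E × F →ₗ[ℝ] E × F) :
    LinearMap.trace ℝ (E × F) M =
      LinearMap.trace ℝ E (LinearMap.fst ℝ E F ∘ₗ M ∘ₗ LinearMap.inl ℝ E F) +
      LinearMap.trace ℝ F (LinearMap.snd ℝ E F ∘ₗ M ∘ₗ LinearMap.inr ℝ E F) := by
  have hM : M = LinearMap.inl ℝ E F ∘ₗ (LinearMap.fst ℝ E F ∘ₗ M)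
      + LinearMap.inr ℝ E F ∘ₗ (LinearMap.snd ℝ E F ∘ₗ M) := by
    ext z <;> simp
  conv_lhs => rw [hM]
  rw [map_add,
    LinearMap.trace_comp_comm' (LinearMap.fst ℝ E F ∘ₗ M) (LinearMap.inl ℝ E F),
    LinearMap.trace_comp_comm' (LinearMap.snd ℝ E F ∘ₗ M) (LinearMap.inr ℝ E F),
    LinearMap.comp_assoc, LinearMap.comp_assoc]

/-- **Trace of the modified Jacobian (simultaneous gradient descent).**
`Tr(J̃) = Tr(J) − (h/2)(α Tr((∇_φ f)²) + λ Tr((∇_θ g)²)) − (h/2)(α + λ) Tr(∇_φ g · ∇_θ f)`. -/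
theorem modified_jacobian_trace_simultaneous {m n : ℕ}
    (f : EuclideanSpace ℝ (Fin m) × EuclideanSpace ℝ (Fin n) → EuclideanSpace ℝ (Fin m))
    (g : EuclideanSpace ℝ (Fin m) × EuclideanSpace ℝ (Fin n) → EuclideanSpace ℝ (Fin n))
    (hf : ContDiff ℝ 2 f) (hg : ContDiff ℝ 2 g)
    (zs : EuclideanSpace ℝ (Fin m) × EuclideanSpace ℝ (Fin n))
    (hfz : f zs = 0) (hgz : g zs = 0)
    (α lam h : ℝ) (hα : 0 < α) (hlam : 0 < lam) (hh : 0 < h)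
    (Ftilde : EuclideanSpace ℝ (Fin m) × EuclideanSpace ℝ (Fin n) →
      EuclideanSpace ℝ (Fin m) × EuclideanSpace ℝ (Fin n))
    (hFtilde : Ftilde = fun z =>
      (f z - (α * h / 2) • fderiv ℝ f z (f z, g z),
       g z - (lam * h / 2) • fderiv ℝ g z (f z, g z))) :
    LinearMap.trace ℝ (EuclideanSpace ℝ (Fin m) × EuclideanSpace ℝ (Fin n))
        (fderiv ℝ Ftilde zs : _ →ₗ[ℝ] _) =
      LinearMap.trace ℝ (EuclideanSpace ℝ (Fin m) × EuclideanSpace ℝ (Fin n))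
          (fderiv ℝ (fun z => (f z, g z)) zs : _ →ₗ[ℝ] _) -
        (h / 2) *
          (α * LinearMap.trace ℝ (EuclideanSpace ℝ (Fin m)) (dPhi f zs ∘L dPhi f zs : _ →ₗ[ℝ] _) +
            lam * LinearMap.trace ℝ (EuclideanSpace ℝ (Fin n)) (dTheta g zs ∘L dTheta g zs : _ →ₗ[ℝ] _)) -
        (h / 2) * (α + lam) *
          LinearMap.trace ℝ (EuclideanSpace ℝ (Fin m)) (dTheta f zs ∘L dPhi g zs : _ →ₗ[ℝ] _) := by
  have hfd : Differentiable ℝ f := hf.differentiable (by norm_num)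
  have hgd : Differentiable ℝ g := hg.differentiable (by norm_num)
  set A := fderiv ℝ f zs with hA
  set B := fderiv ℝ g zs with hB
  have hP : HasFDerivAt (fun z => (f z, g z)) (A.prod B) zs :=
    HasFDerivAt.prodMk (hfd zs).hasFDerivAt (hgd zs).hasFDerivAt
  have hf' : HasFDerivAt (fderiv ℝ f) (fderiv ℝ (fderiv ℝ f) zs) zs :=
    (((hf.fderiv_right (m := 1) (by norm_num)).differentiable one_ne_zero) zs).hasFDerivAt
  have hg' : HasFDerivAt (fderiv ℝ g) (fderiv ℝ (fderiv ℝ g) zs) zs :=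
    (((hg.fderiv_right (m := 1) (by norm_num)).differentiable one_ne_zero) zs).hasFDerivAt
  have h1 : HasFDerivAt (fun z => fderiv ℝ f z (f z, g z)) (A ∘L (A.prod B)) zs := by
    have := hf'.clm_apply hP
    simpa [hfz, hgz, Prod.mk_zero_zero, ← hA] using this
  have h2 : HasFDerivAt (fun z => fderiv ℝ g z (f z, g z)) (B ∘L (A.prod B)) zs := by
    have := hg'.clm_apply hP
    simpa [hfz, hgz, Prod.mk_zero_zero, ← hB] using this
  have hFt : HasFDerivAt Ftilde
      ((A - (α * h / 2) • (A ∘L (A.prod B))).prod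
       (B - (lam * h / 2) • (B ∘L (A.prod B)))) zs := by
    rw [hFtilde]
    exact HasFDerivAt.prodMk ((hfd zs).hasFDerivAt.sub (h1.const_smul (α * h / 2)))
      ((hgd zs).hasFDerivAt.sub (h2.const_smul (lam * h / 2)))
  have hDFt := hFt.fderiv
  have hDP := hP.fderiv
  set Aφ := dPhi f zs with hAφ
  set Aθ := dTheta f zs with hAθ
  set Bφ := dPhi g zs with hBφ
  set Bθ := dTheta g zs with hBθ
  have hAsplit : ∀ p : EuclideanSpace ℝ (Fin m) × EuclideanSpace ℝ (Fin n),
      A p = A (p.1, 0) + A (0, p.2) := by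
    intro p; rw [← map_add]; simp
  have hBsplit : ∀ p : EuclideanSpace ℝ (Fin m) × EuclideanSpace ℝ (Fin n),
      B p = B (p.1, 0) + B (0, p.2) := by
    intro p; rw [← map_add]; simp
  have blk1 : LinearMap.fst ℝ (EuclideanSpace ℝ (Fin m)) (EuclideanSpace ℝ (Fin n)) ∘ₗ
      (fderiv ℝ Ftilde zs : _ →ₗ[ℝ] _) ∘ₗ
        LinearMap.inl ℝ (EuclideanSpace ℝ (Fin m)) (EuclideanSpace ℝ (Fin n))
      = (Aφ : _ →ₗ[ℝ] _) - (α * h / 2) • ((Aφ ∘L Aφ + Aθ ∘L Bφ) : _ →ₗ[ℝ] _) := by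
    rw [hDFt]
    refine LinearMap.ext fun x => ?_
    simp only [LinearMap.comp_apply, LinearMap.inl_apply, LinearMap.fst_apply,
      ContinuousLinearMap.coe_coe, ContinuousLinearMap.prod_apply,
      ContinuousLinearMap.sub_apply, ContinuousLinearMap.smul_apply,
      ContinuousLinearMap.comp_apply, LinearMap.sub_apply, LinearMap.smul_apply,
      ContinuousLinearMap.add_apply]
    rw [hAsplit (A (x, 0), B (x, 0))]
    simp [hAφ, hAθ, hBφ, dPhi, dTheta, ← hA, ← hB, smul_add]
  have blk2 : LinearMap.snd ℝ (EuclideanSpace ℝ (Fin m)) (EuclideanSpace ℝ (Fin n)) ∘ₗ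
      (fderiv ℝ Ftilde zs : _ →ₗ[ℝ] _) ∘ₗ
        LinearMap.inr ℝ (EuclideanSpace ℝ (Fin m)) (EuclideanSpace ℝ (Fin n))
      = (Bθ : _ →ₗ[ℝ] _) - (lam * h / 2) • ((Bφ ∘L Aθ + Bθ ∘L Bθ) : _ →ₗ[ℝ] _) := by
    rw [hDFt]
    refine LinearMap.ext fun x => ?_
    simp only [LinearMap.comp_apply, LinearMap.inr_apply, LinearMap.snd_apply,
      ContinuousLinearMap.coe_coe, ContinuousLinearMap.prod_apply,
      ContinuousLinearMap.sub_apply, ContinuousLinearMap.smul_apply,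
      ContinuousLinearMap.comp_apply, LinearMap.sub_apply, LinearMap.smul_apply,
      ContinuousLinearMap.add_apply]
    rw [hBsplit (A (0, x), B (0, x))]
    simp [hBθ, hAθ, hBφ, dPhi, dTheta, ← hA, ← hB, smul_add]
  have blkJ1 : LinearMap.fst ℝ (EuclideanSpace ℝ (Fin m)) (EuclideanSpace ℝ (Fin n)) ∘ₗ
      (fderiv ℝ (fun z => (f z, g z)) zs : _ →ₗ[ℝ] _) ∘ₗ
        LinearMap.inl ℝ (EuclideanSpace ℝ (Fin m)) (EuclideanSpace ℝ (Fin n))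
      = (Aφ : _ →ₗ[ℝ] _) := by
    rw [hDP]; refine LinearMap.ext fun x => ?_; simp [hAφ, dPhi, ← hA]
  have blkJ2 : LinearMap.snd ℝ (EuclideanSpace ℝ (Fin m)) (EuclideanSpace ℝ (Fin n)) ∘ₗ
      (fderiv ℝ (fun z => (f z, g z)) zs : _ →ₗ[ℝ] _) ∘ₗ
        LinearMap.inr ℝ (EuclideanSpace ℝ (Fin m)) (EuclideanSpace ℝ (Fin n))
      = (Bθ : _ →ₗ[ℝ] _) := by
    rw [hDP]; refine LinearMap.ext fun x => ?_; simp [hBθ, dTheta, ← hB]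
  have swap : LinearMap.trace ℝ (EuclideanSpace ℝ (Fin n)) ((Bφ ∘L Aθ) : _ →ₗ[ℝ] _)
      = LinearMap.trace ℝ (EuclideanSpace ℝ (Fin m)) ((Aθ ∘L Bφ) : _ →ₗ[ℝ] _) := by
    rw [ContinuousLinearMap.toLinearMap_comp, ContinuousLinearMap.toLinearMap_comp]
    exact LinearMap.trace_comp_comm' _ _
  rw [trace_prod_decomp (E := EuclideanSpace ℝ (Fin m)) (F := EuclideanSpace ℝ (Fin n))
      ((fderiv ℝ Ftilde zs : _ →ₗ[ℝ] _)),
    trace_prod_decomp (E := EuclideanSpace ℝ (Fin m)) (F := EuclideanSpace ℝ (Fin n))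
      ((fderiv ℝ (fun z => (f z, g z)) zs : _ →ₗ[ℝ] _)),
    blk1, blk2, blkJ1, blkJ2]
  simp only [map_sub, map_smul, ContinuousLinearMap.coe_add, map_add, smul_eq_mul, swap]
  ring
end
end
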